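/- arXiv:1810.02881 — 10 statements merged into one kernel-verified Lean document; each statement's English description precedes it below -/
import Mathlib

section
/- Let k < p be positive integers and d_V = pk − k(k+1)/2. The vectorized Cayley transform φ ↦ vec(C(X_φ)), viewed as a map from ℝ^{d_V} to ℝ^{pk}, is continuously differentiable on all of ℝ^{d_V}, with derivative matrix DC(φ) = 2[ I_{p×k}ᵀ (I_p − X_φ)^{−T} ⊗ (I_p − X_φ)^{−1} ] Γ_V, where ⊗ denotes the Kronecker product and Γ_V = [ (Θ₁ᵀ ⊗ Θ₁ᵀ) D̃_k , (I_{p²} − K_{p,p})(Θ₁ᵀ ⊗ Θ₂ᵀ) ]. -/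
open Matrix MeasureTheory Filter
open scoped Kronecker ENNReal

noncomputable section

/-- The `p × k` matrix whose top `k × k` block is the identity and whose
remaining entries are zero. -/
def Ipk (p k : ℕ) : Matrix (Fin p) (Fin k) ℝ :=
  Matrix.of fun i j => if (i : ℕ) = (j : ℕ) then 1 else 0

/-- The (modified) Cayley transform `C(X) = (I + X)(I - X)⁻¹ I_{p×k}`. -/
def cayley (p k : ℕ) (X : Matrix (Fin p) (Fin p) ℝ) : Matrix (Fin p) (Fin k) ℝ :=
  (1 + X) * (1 - X)⁻¹ * Ipk p k

/-- Top `k × k` block of a `p × k` matrix. -/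
def topBlock {p k : ℕ} (h : k ≤ p) (Q : Matrix (Fin p) (Fin k) ℝ) :
    Matrix (Fin k) (Fin k) ℝ :=
  Q.submatrix (Fin.castLE h) id

/-- Bottom `(p-k) × k` block of a `p × k` matrix. -/
def botBlock {p k : ℕ} (h : k ≤ p) (Q : Matrix (Fin p) (Fin k) ℝ) :
    Matrix (Fin (p - k)) (Fin k) ℝ :=
  Q.submatrix (fun i => ⟨k + i.1, by have := i.isLt; omega⟩) id

/-- The skew-symmetric block matrix `[[B, -Aᵀ], [A, 0]]` as a `p × p` matrix. -/
def blockX {p k : ℕ} (h : k ≤ p) (B : Matrix (Fin k) (Fin k) ℝ)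
    (A : Matrix (Fin (p - k)) (Fin k) ℝ) : Matrix (Fin p) (Fin p) ℝ :=
  (Matrix.fromBlocks B (-Aᵀ) A 0).submatrix
    (fun i => finSumFinEquiv.symm (Fin.cast (by omega) i))
    (fun j => finSumFinEquiv.symm (Fin.cast (by omega) j))

/-- Position of the strictly subdiagonal entry `(i, j)` (`j < i`) of a `k × k`
matrix in the column-major enumeration of the strictly subdiagonal entries. -/
def lowIdx (k i j : ℕ) : ℕ := j * k + i - (j + 1) * (j + 2) / 2

/-- The `k × k` skew-symmetric matrix whose strictly subdiagonal entries, in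
column-major order, are given by `b`. -/
def skewOfVec (k : ℕ) (b : Fin (k * (k - 1) / 2) → ℝ) : Matrix (Fin k) (Fin k) ℝ :=
  Matrix.of fun i j =>
    if (j : ℕ) < (i : ℕ) then
      if h : lowIdx k i j < k * (k - 1) / 2 then b ⟨lowIdx k i j, h⟩ else 0
    else if (i : ℕ) < (j : ℕ) then
      if h : lowIdx k j i < k * (k - 1) / 2 then -b ⟨lowIdx k j i, h⟩ else 0
    else 0

/-- The vector of strictly subdiagonal entries of a `k × k` matrix, in
column-major order. -/
def subdiagVec {k : ℕ} (M : Matrix (Fin k) (Fin k) ℝ) : Fin (k * (k - 1) / 2) → ℝ :=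
  fun t => ∑ i : Fin k, ∑ j : Fin k,
    if (j : ℕ) < (i : ℕ) ∧ lowIdx k (i : ℕ) (j : ℕ) = (t : ℕ) then M i j else 0

/-- Column-major vectorization of an `a × b` matrix, indexed by
(column, row) pairs. -/
def vecP {a b : ℕ} (M : Matrix (Fin a) (Fin b) ℝ) : Fin b × Fin a → ℝ :=
  fun q => M q.2 q.1

/-- The max-norm of a matrix: the maximum of the absolute values of its
entries. -/
def maxNorm {a b : ℕ} (M : Matrix (Fin a) (Fin b) ℝ) : ℝ :=
  ⨆ q : Fin a × Fin b, |M q.1 q.2|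

/-- The Frobenius norm of a matrix. -/
def frobNorm {a b : ℕ} (M : Matrix (Fin a) (Fin b) ℝ) : ℝ :=
  Real.sqrt (∑ i, ∑ j, (M i j) ^ 2)


/-- `Θ₁ = [I_k 0]`, a `k × p` matrix. -/
def Theta1 (p k : ℕ) : Matrix (Fin k) (Fin p) ℝ := (Ipk p k)ᵀ

/-- `Θ₂ = [0 I_{p-k}]`, a `(p-k) × p` matrix. -/
def Theta2 (p k : ℕ) : Matrix (Fin (p - k)) (Fin p) ℝ :=
  Matrix.of fun i j => if (k + i.1 : ℕ) = (j : ℕ) then 1 else 0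

/-- The matrix `Γ_V = [(Θ₁ᵀ ⊗ Θ₁ᵀ) D̃_k, (I_{p²} - K_{p,p})(Θ₁ᵀ ⊗ Θ₂ᵀ)]`. -/
def GammaV (p k : ℕ) (K : Matrix (Fin p × Fin p) (Fin p × Fin p) ℝ)
    (Dt : Matrix (Fin k × Fin k) (Fin (k * (k - 1) / 2)) ℝ) :
    Matrix (Fin p × Fin p) (Fin (k * (k - 1) / 2) ⊕ (Fin k × Fin (p - k))) ℝ :=
  Matrix.fromCols (((Theta1 p k)ᵀ ⊗ₖ (Theta1 p k)ᵀ) * Dt)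
    ((1 - K) * ((Theta1 p k)ᵀ ⊗ₖ (Theta2 p k)ᵀ))

/-- The matrix `X_φ = [[B(b), -Aᵀ],[A, 0]]` built from the Euclidean
parameter `φ = (b, vec A)`. -/
def Xphi (p k : ℕ) (h : k ≤ p)
    (φ : (Fin (k * (k - 1) / 2) ⊕ (Fin k × Fin (p - k))) → ℝ) :
    Matrix (Fin p) (Fin p) ℝ :=
  blockX h (skewOfVec k (φ ∘ Sum.inl))
    (Matrix.of fun i j => φ (Sum.inr (j, i)))

lemma T_two (j : ℕ) : 2 * ((j+1)*(j+2)/2) = (j+1)*(j+2) := by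
  have h : 2 ∣ (j+1)*(j+2) := by
    have e : (j+1)*(j+2) = (j+1)*((j+1)+1) := by ring
    exact e ▸ (Nat.even_mul_succ_self (j+1)).two_dvd
  obtain ⟨m, hm⟩ := h
  omega

lemma N_two (k : ℕ) : 2 * (k*(k-1)/2) = k*(k-1) := by
  have h : 2 ∣ k*(k-1) := by
    rcases Nat.eq_zero_or_pos k with h|h
    · simp [h]
    · have e : (k-1)+1 = k := Nat.succ_pred_eq_of_pos h
      have : k*(k-1) = (k-1)*((k-1)+1) := by rw [e]; ring
      exact this ▸ (Nat.even_mul_succ_self (k-1)).two_dvd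
  obtain ⟨m, hm⟩ := h
  omega

lemma T_le {k i j : ℕ} (hj : j < i) (hi : i < k) : (j+1)*(j+2)/2 ≤ j*k + i := by
  have h2 := T_two j
  nlinarith [Nat.mul_le_mul_left j (show j+1 ≤ k by omega)]

lemma lowIdx_lt_lowIdx {k i j i' j' : ℕ} (hj : j < i) (hi : i < k) (hj' : j' < i')
    (hi' : i' < k) (hlex : j < j' ∨ (j = j' ∧ i < i')) :
    lowIdx k i j < lowIdx k i' j' := by
  have h2 := T_two j
  have h2' := T_two j'
  have hle := T_le hj hi
  have hle' := T_le hj' hi'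
  unfold lowIdx
  rcases hlex with h | ⟨rfl, h⟩
  · zify [hle, hle']
    have h2z : 2*(((j+1)*(j+2)/2 : ℕ) : ℤ) = ((j:ℤ)+1)*((j:ℤ)+2) := by exact_mod_cast h2
    have h2z' : 2*(((j'+1)*(j'+2)/2 : ℕ) : ℤ) = ((j':ℤ)+1)*((j':ℤ)+2) := by exact_mod_cast h2'
    nlinarith [h2z, h2z', (show (j:ℤ) < i by exact_mod_cast hj),
      (show (i:ℤ) < k by exact_mod_cast hi), (show (j':ℤ) < i' by exact_mod_cast hj'),
      (show (i':ℤ) < k by exact_mod_cast hi'), (show (j:ℤ) < j' by exact_mod_cast h),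
      mul_nonneg (show (0:ℤ) ≤ (j':ℤ) - j - 1 by
        have : (j:ℤ) < j' := by exact_mod_cast h
        linarith) (show (0:ℤ) ≤ (k:ℤ) - j' by
        have : (j':ℤ) < k := by
          have : (j':ℤ) < i' := by exact_mod_cast hj'
          have : (i':ℤ) < k := by exact_mod_cast hi'
          omega
        linarith),
      sq_nonneg ((j':ℤ) - j - 2)]
  · zify [hle, hle']
    omega

lemma lowIdx_lt_N {k i j : ℕ} (hj : j < i) (hi : i < k) : lowIdx k i j < k*(k-1)/2 := by
  have h2 := T_two j
  have hN := N_two k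
  have hle := T_le hj hi
  have natkey : 2*(j*k) + 2*i < k*(k-1) + (j+1)*(j+2) := by
    zify [show 1 ≤ k by omega]
    nlinarith [(show (j:ℤ) < i by exact_mod_cast hj), (show (i:ℤ) < k by exact_mod_cast hi),
      sq_nonneg ((k:ℤ) - j - 2)]
  unfold lowIdx
  omega

lemma lowIdx_inj {k i j i' j' : ℕ} (hj : j < i) (hi : i < k) (hj' : j' < i')
    (hi' : i' < k) (he : lowIdx k i j = lowIdx k i' j') : i = i' ∧ j = j' := by
  rcases lt_trichotomy j j' with h | h | h
  · exact absurd he (Nat.ne_of_lt (lowIdx_lt_lowIdx hj hi hj' hi' (Or.inl h)))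
  · subst h
    rcases lt_trichotomy i i' with h' | h' | h'
    · exact absurd he (Nat.ne_of_lt (lowIdx_lt_lowIdx hj hi hj' hi' (Or.inr ⟨rfl, h'⟩)))
    · exact ⟨h', rfl⟩
    · exact absurd he.symm (Nat.ne_of_lt (lowIdx_lt_lowIdx hj' hi' hj hi (Or.inr ⟨rfl, h'⟩)))
  · exact absurd he.symm (Nat.ne_of_lt (lowIdx_lt_lowIdx hj' hi' hj hi (Or.inl h)))

lemma lowIdx_surj (k t : ℕ) (ht : t < k*(k-1)/2) :
    ∃ i j : Fin k, (j:ℕ) < (i:ℕ) ∧ lowIdx k i j = t := by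
  classical
  set f : Fin k × Fin k → ℕ := fun q => lowIdx k q.1 q.2 with hf
  set S : Finset (Fin k × Fin k) := Finset.univ.filter (fun q => (q.2:ℕ) < (q.1:ℕ)) with hS
  have hcard : S.card = k*(k-1)/2 := by
    rw [hS, Finset.card_filter]
    rw [Fintype.sum_prod_type]
    have h1 : ∀ i : Fin k, (∑ j : Fin k, if (j:ℕ) < (i:ℕ) then 1 else 0) = (i:ℕ) := by
      intro i
      rw [Fin.sum_univ_eq_sum_range (fun j => if j < (i:ℕ) then 1 else 0) k]
      have hsub : Finset.range (i:ℕ) ⊆ Finset.range k := Finset.range_subset_range.2 i.isLt.le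
      have hz : ∀ x ∈ Finset.range k, x ∉ Finset.range (i:ℕ) →
          (if x < (i:ℕ) then (1:ℕ) else 0) = 0 := by
        intro x _ hx
        rw [Finset.mem_range, not_lt] at hx
        exact if_neg (not_lt.2 hx)
      rw [← Finset.sum_subset hsub hz]
      calc ∑ x ∈ Finset.range (i:ℕ), (if x < (i:ℕ) then (1:ℕ) else 0)
          = ∑ _x ∈ Finset.range (i:ℕ), 1 :=
            Finset.sum_congr rfl (fun x hx => if_pos (Finset.mem_range.1 hx))
        _ = (i:ℕ) := by simp
    rw [Finset.sum_congr rfl (fun i _ => h1 i)]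
    rw [Fin.sum_univ_eq_sum_range (fun i => i) k]
    have := Finset.sum_range_id_mul_two k
    omega
  have hinj : Set.InjOn f S := by
    intro q hq q' hq' he
    rw [hS] at hq hq'
    have h1 := (Finset.mem_filter.1 hq).2
    have h2 := (Finset.mem_filter.1 hq').2
    obtain ⟨e1, e2⟩ := lowIdx_inj h1 q.1.isLt h2 q'.1.isLt he
    exact Prod.ext (Fin.ext e1) (Fin.ext e2)
  have himg : S.image f ⊆ Finset.range (k*(k-1)/2) := by
    intro x hx
    obtain ⟨q, hq, rfl⟩ := Finset.mem_image.1 hx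
    rw [hS] at hq
    exact Finset.mem_range.2 (lowIdx_lt_N (Finset.mem_filter.1 hq).2 q.1.isLt)
  have heq : S.image f = Finset.range (k*(k-1)/2) := by
    apply Finset.eq_of_subset_of_card_le himg
    rw [Finset.card_range, Finset.card_image_of_injOn hinj, hcard]
  have ht' : t ∈ S.image f := heq ▸ Finset.mem_range.2 ht
  obtain ⟨q, hq, hq2⟩ := Finset.mem_image.1 ht'
  rw [hS] at hq
  exact ⟨q.1, q.2, (Finset.mem_filter.1 hq).2, hq2⟩


section Part2

lemma skewOfVec_transpose (k : ℕ) (b : Fin (k*(k-1)/2) → ℝ) :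
    (skewOfVec k b)ᵀ = -(skewOfVec k b) := by
  ext i j
  simp only [Matrix.transpose_apply, Matrix.neg_apply, skewOfVec, Matrix.of_apply]
  split_ifs <;> first | omega | simp

lemma subdiagVec_skewOfVec (k : ℕ) (b : Fin (k*(k-1)/2) → ℝ) :
    subdiagVec (skewOfVec k b) = b := by
  funext t
  obtain ⟨i0, j0, hji, hlow⟩ := lowIdx_surj k t t.isLt
  unfold subdiagVec
  rw [Finset.sum_eq_single i0 ?h0 (by simp)]
  case h0 =>
    intro i _ hne
    apply Finset.sum_eq_zero
    intro j _
    rw [if_neg]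
    rintro ⟨h1, h2⟩
    exact hne (Fin.ext (lowIdx_inj h1 i.isLt hji i0.isLt (h2.trans hlow.symm)).1)
  rw [Finset.sum_eq_single j0 ?h1 (by simp)]
  case h1 =>
    intro j _ hne
    rw [if_neg]
    rintro ⟨h1, h2⟩
    exact hne (Fin.ext (lowIdx_inj h1 i0.isLt hji i0.isLt (h2.trans hlow.symm)).2)
  rw [if_pos ⟨hji, hlow⟩]
  simp only [skewOfVec, Matrix.of_apply, if_pos hji]
  rw [dif_pos (lowIdx_lt_N hji i0.isLt)]
  congr 1
  exact Fin.ext hlow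

lemma skewOfVec_add (k : ℕ) (b c : Fin (k*(k-1)/2) → ℝ) :
    skewOfVec k (b + c) = skewOfVec k b + skewOfVec k c := by
  ext i j
  simp only [skewOfVec, Matrix.of_apply, Matrix.add_apply]
  split_ifs <;> simp [Pi.add_apply] <;> ring_nf

lemma skewOfVec_smul (k : ℕ) (r : ℝ) (b : Fin (k*(k-1)/2) → ℝ) :
    skewOfVec k (r • b) = r • skewOfVec k b := by
  ext i j
  simp only [skewOfVec, Matrix.of_apply, Matrix.smul_apply, Pi.smul_apply, smul_eq_mul]
  split_ifs <;> simp <;> ring_nf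

lemma blockX_add {p k : ℕ} (h : k ≤ p) (B B' : Matrix (Fin k) (Fin k) ℝ)
    (A A' : Matrix (Fin (p-k)) (Fin k) ℝ) :
    blockX h (B + B') (A + A') = blockX h B A + blockX h B' A' := by
  unfold blockX
  have e : Matrix.fromBlocks (B + B') (-(A + A')ᵀ) (A + A')
        (0 : Matrix (Fin (p-k)) (Fin (p-k)) ℝ)
      = Matrix.fromBlocks B (-Aᵀ) A 0 + Matrix.fromBlocks B' (-A'ᵀ) A' 0 := by
    ext (i|i) (j|j) <;> simp <;> ring
  rw [e]
  rfl

lemma blockX_smul {p k : ℕ} (h : k ≤ p) (r : ℝ) (B : Matrix (Fin k) (Fin k) ℝ)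
    (A : Matrix (Fin (p-k)) (Fin k) ℝ) :
    blockX h (r • B) (r • A) = r • blockX h B A := by
  unfold blockX
  have e : Matrix.fromBlocks (r • B) (-(r • A)ᵀ) (r • A)
        (0 : Matrix (Fin (p-k)) (Fin (p-k)) ℝ)
      = r • Matrix.fromBlocks B (-Aᵀ) A 0 := by
    ext (i|i) (j|j) <;> simp
  rw [e]
  rfl

lemma blockX_transpose {p k : ℕ} (h : k ≤ p) (B : Matrix (Fin k) (Fin k) ℝ)
    (A : Matrix (Fin (p-k)) (Fin k) ℝ) (hB : Bᵀ = -B) :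
    (blockX h B A)ᵀ = -(blockX h B A) := by
  unfold blockX
  rw [Matrix.transpose_submatrix]
  have e : (Matrix.fromBlocks B (-Aᵀ) A (0 : Matrix (Fin (p-k)) (Fin (p-k)) ℝ))ᵀ
      = -(Matrix.fromBlocks B (-Aᵀ) A 0) := by
    rw [Matrix.fromBlocks_transpose, hB]
    ext (i|i) (j|j) <;> simp
  rw [e]
  rfl

lemma isUnit_one_sub_skew {n : ℕ} (X : Matrix (Fin n) (Fin n) ℝ) (hX : Xᵀ = -X) :
    IsUnit (1 - X) := by
  have hdet : (1 - X).det ≠ 0 := by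
    intro h0
    obtain ⟨v, hv, hmul⟩ := Matrix.exists_mulVec_eq_zero_iff.2 h0
    have hskew : v ⬝ᵥ (X *ᵥ v) = 0 := by
      have hc : v ⬝ᵥ (X *ᵥ v) = -(v ⬝ᵥ (X *ᵥ v)) := by
        calc v ⬝ᵥ (X *ᵥ v) = (v ᵥ* X) ⬝ᵥ v := Matrix.dotProduct_mulVec v X v
          _ = (Xᵀ *ᵥ v) ⬝ᵥ v := by rw [Matrix.mulVec_transpose]
          _ = ((-X) *ᵥ v) ⬝ᵥ v := by rw [hX]
          _ = -(v ⬝ᵥ (X *ᵥ v)) := by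
              rw [Matrix.neg_mulVec, neg_dotProduct, dotProduct_comm]
      linarith
    have hvv : v ⬝ᵥ v = 0 := by
      have h2 : v ⬝ᵥ ((1 - X) *ᵥ v) = v ⬝ᵥ v - v ⬝ᵥ (X *ᵥ v) := by
        rw [Matrix.sub_mulVec, Matrix.one_mulVec, dotProduct_sub]
      rw [hmul] at h2
      simp only [dotProduct_zero] at h2
      linarith
    exact hv (dotProduct_self_eq_zero.1 hvv)
  exact (Matrix.isUnit_iff_isUnit_det _).2 (isUnit_iff_ne_zero.2 hdet)

lemma kron_mulVec {a b c d : ℕ} (A : Matrix (Fin a) (Fin b) ℝ) (M : Matrix (Fin b) (Fin c) ℝ)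
    (C : Matrix (Fin c) (Fin d) ℝ) :
    (Cᵀ ⊗ₖ A) *ᵥ vecP M = vecP (A * M * C) := by
  funext q
  simp only [Matrix.mulVec, dotProduct, vecP, Matrix.kroneckerMap_apply,
    Matrix.transpose_apply]
  rw [Fintype.sum_prod_type, Matrix.mul_apply]
  refine Finset.sum_congr rfl fun j _ => ?_
  rw [Matrix.mul_apply, Finset.sum_mul]
  exact Finset.sum_congr rfl fun i _ => by ring

end Part2

section Part3

variable {p k : ℕ}

lemma theta1T_mul_apply {m : Type*} [Fintype m] (N : Matrix (Fin k) m ℝ) (i : Fin p) (c : m) :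
    ((Theta1 p k)ᵀ * N) i c = if h : (i:ℕ) < k then N ⟨(i:ℕ), h⟩ c else 0 := by
  rw [Matrix.mul_apply]
  have he : ∀ a : Fin k, (Theta1 p k)ᵀ i a = if (i:ℕ) = (a:ℕ) then 1 else 0 := fun a => rfl
  by_cases h : (i:ℕ) < k
  · rw [dif_pos h]
    rw [Finset.sum_eq_single (⟨(i:ℕ), h⟩ : Fin k)]
    · rw [he, if_pos rfl, one_mul]
    · intro a _ ha
      rw [he, if_neg (fun e => ha (Fin.ext e.symm)), zero_mul]
    · simp
  · rw [dif_neg h]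
    apply Finset.sum_eq_zero
    intro a _
    rw [he, if_neg (by omega), zero_mul]

lemma mul_theta1_apply {m : Type*} [Fintype m] (N : Matrix m (Fin k) ℝ) (r : m) (j : Fin p) :
    (N * Theta1 p k) r j = if h : (j:ℕ) < k then N r ⟨(j:ℕ), h⟩ else 0 := by
  rw [Matrix.mul_apply]
  have he : ∀ a : Fin k, Theta1 p k a j = if (j:ℕ) = (a:ℕ) then 1 else 0 := fun a => rfl
  by_cases h : (j:ℕ) < k
  · rw [dif_pos h]
    rw [Finset.sum_eq_single (⟨(j:ℕ), h⟩ : Fin k)]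
    · rw [he, if_pos rfl, mul_one]
    · intro a _ ha
      rw [he, if_neg (fun e => ha (Fin.ext e.symm)), mul_zero]
    · simp
  · rw [dif_neg h]
    apply Finset.sum_eq_zero
    intro a _
    rw [he, if_neg (by omega), mul_zero]

lemma theta2T_mul_apply {m : Type*} [Fintype m] (N : Matrix (Fin (p-k)) m ℝ) (i : Fin p) (c : m) :
    ((Theta2 p k)ᵀ * N) i c
      = if h : k ≤ (i:ℕ) then N ⟨(i:ℕ) - k, by have := i.isLt; omega⟩ c else 0 := by
  rw [Matrix.mul_apply]
  have he : ∀ a : Fin (p-k), (Theta2 p k)ᵀ i a = if (k + (a:ℕ) : ℕ) = (i:ℕ) then 1 else 0 :=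
    fun a => rfl
  by_cases h : k ≤ (i:ℕ)
  · rw [dif_pos h]
    rw [Finset.sum_eq_single (⟨(i:ℕ) - k, by have := i.isLt; omega⟩ : Fin (p-k))]
    · rw [he, if_pos (by simp; omega), one_mul]
    · intro a _ ha
      rw [he, if_neg (fun e => ha (Fin.ext (by simp at e ⊢; omega))), zero_mul]
    · simp
  · rw [dif_neg h]
    apply Finset.sum_eq_zero
    intro a _
    rw [he, if_neg (by omega), zero_mul]

lemma mul_theta2_apply {m : Type*} [Fintype m] (N : Matrix m (Fin (p-k)) ℝ) (r : m) (j : Fin p) :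
    (N * Theta2 p k) r j
      = if h : k ≤ (j:ℕ) then N r ⟨(j:ℕ) - k, by have := j.isLt; omega⟩ else 0 := by
  rw [Matrix.mul_apply]
  have he : ∀ a : Fin (p-k), Theta2 p k a j = if (k + (a:ℕ) : ℕ) = (j:ℕ) then 1 else 0 :=
    fun a => rfl
  by_cases h : k ≤ (j:ℕ)
  · rw [dif_pos h]
    rw [Finset.sum_eq_single (⟨(j:ℕ) - k, by have := j.isLt; omega⟩ : Fin (p-k))]
    · rw [he, if_pos (by simp; omega), mul_one]
    · intro a _ ha
      rw [he, if_neg (fun e => ha (Fin.ext (by simp at e ⊢; omega))), mul_zero]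
    · simp
  · rw [dif_neg h]
    apply Finset.sum_eq_zero
    intro a _
    rw [he, if_neg (by omega), mul_zero]

lemma finSumFinEquiv_symm_eq {k m : ℕ} (i : Fin (k + m)) :
    finSumFinEquiv.symm i
      = if h : (i:ℕ) < k then Sum.inl ⟨(i:ℕ), h⟩
        else Sum.inr ⟨(i:ℕ) - k, by have := i.isLt; omega⟩ := by
  by_cases h : (i:ℕ) < k
  · rw [dif_pos h, Equiv.symm_apply_eq, finSumFinEquiv_apply_left]
    exact Fin.ext (by simp)
  · rw [dif_neg h, Equiv.symm_apply_eq, finSumFinEquiv_apply_right]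
    exact Fin.ext (by simp; omega)

lemma theta_identity (hkp : k < p) (B : Matrix (Fin k) (Fin k) ℝ)
    (A : Matrix (Fin (p-k)) (Fin k) ℝ) :
    (Theta1 p k)ᵀ * B * Theta1 p k
      + ((Theta2 p k)ᵀ * A * Theta1 p k - (Theta1 p k)ᵀ * Aᵀ * Theta2 p k)
      = blockX hkp.le B A := by
  ext i j
  simp only [Matrix.add_apply, Matrix.sub_apply]
  rw [mul_theta1_apply, mul_theta1_apply, mul_theta2_apply]
  simp only [theta1T_mul_apply, theta2T_mul_apply]
  rw [blockX, Matrix.submatrix_apply, finSumFinEquiv_symm_eq, finSumFinEquiv_symm_eq]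
  by_cases hi : (i:ℕ) < k <;> by_cases hj : (j:ℕ) < k <;>
    simp only [hi, hj, Fin.coe_cast, dite_true, dite_false, dif_pos, dif_neg, not_lt,
      Matrix.transpose_apply]
  · rw [dif_neg (by omega), dif_neg (by omega)]
    simp [Matrix.fromBlocks_apply₁₁]
  · rw [dif_pos (by omega)]
    simp [Matrix.fromBlocks_apply₁₂]
  · rw [dif_pos (by omega)]
    simp [Matrix.fromBlocks_apply₂₁]
  · simp [Matrix.fromBlocks_apply₂₂]

end Part3

section Part4

variable {p k : ℕ}

lemma Xphi_add (hkp : k ≤ p) (φ ψ : (Fin (k * (k - 1) / 2) ⊕ (Fin k × Fin (p - k))) → ℝ) :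
    Xphi p k hkp (φ + ψ) = Xphi p k hkp φ + Xphi p k hkp ψ := by
  unfold Xphi
  rw [show ((φ + ψ) ∘ Sum.inl) = φ ∘ Sum.inl + ψ ∘ Sum.inl from rfl, skewOfVec_add]
  rw [show (Matrix.of fun i j => (φ + ψ) (Sum.inr (j, i)))
      = (Matrix.of fun i j => φ (Sum.inr (j, i))) + (Matrix.of fun i j => ψ (Sum.inr (j, i)))
      from rfl]
  exact blockX_add hkp _ _ _ _

lemma Xphi_smul (hkp : k ≤ p) (r : ℝ) (φ : (Fin (k * (k - 1) / 2) ⊕ (Fin k × Fin (p - k))) → ℝ) :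
    Xphi p k hkp (r • φ) = r • Xphi p k hkp φ := by
  unfold Xphi
  rw [show ((r • φ) ∘ Sum.inl) = r • (φ ∘ Sum.inl) from rfl, skewOfVec_smul]
  rw [show (Matrix.of fun i j => (r • φ) (Sum.inr (j, i)))
      = r • (Matrix.of fun i j => φ (Sum.inr (j, i))) from rfl]
  exact blockX_smul hkp r _ _

lemma Xphi_skew (hkp : k ≤ p) (φ : (Fin (k * (k - 1) / 2) ⊕ (Fin k × Fin (p - k))) → ℝ) :
    (Xphi p k hkp φ)ᵀ = -(Xphi p k hkp φ) :=
  blockX_transpose hkp _ _ (skewOfVec_transpose k _)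

lemma gammaV_mulVec (hkp : k < p) (K : Matrix (Fin p × Fin p) (Fin p × Fin p) ℝ)
    (hK : ∀ M : Matrix (Fin p) (Fin p) ℝ, K *ᵥ vecP M = vecP Mᵀ)
    (Dt : Matrix (Fin k × Fin k) (Fin (k * (k - 1) / 2)) ℝ)
    (hDt : ∀ B : Matrix (Fin k) (Fin k) ℝ, Bᵀ = -B → Dt *ᵥ subdiagVec B = vecP B)
    (ψ : (Fin (k * (k - 1) / 2) ⊕ (Fin k × Fin (p - k))) → ℝ) :
    GammaV p k K Dt *ᵥ ψ = vecP (Xphi p k hkp.le ψ) := by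
  classical
  set B := skewOfVec k (ψ ∘ Sum.inl) with hB
  set A : Matrix (Fin (p-k)) (Fin k) ℝ := Matrix.of fun i j => ψ (Sum.inr (j, i)) with hA
  have hψ : ψ = Sum.elim (ψ ∘ Sum.inl) (ψ ∘ Sum.inr) := by funext x; cases x <;> rfl
  rw [GammaV]
  conv_lhs => rw [hψ, Matrix.fromCols_mulVec_sumElim]
  have h1 : (((Theta1 p k)ᵀ ⊗ₖ (Theta1 p k)ᵀ) * Dt) *ᵥ (ψ ∘ Sum.inl)
      = vecP ((Theta1 p k)ᵀ * B * Theta1 p k) := by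
    rw [← Matrix.mulVec_mulVec]
    have hbv : Dt *ᵥ (ψ ∘ Sum.inl) = vecP B := by
      have := hDt B (skewOfVec_transpose k _)
      rwa [hB, subdiagVec_skewOfVec] at this
    rw [hbv]
    exact kron_mulVec ((Theta1 p k)ᵀ) B (Theta1 p k)
  have h2 : ((1 - K) * ((Theta1 p k)ᵀ ⊗ₖ (Theta2 p k)ᵀ)) *ᵥ (ψ ∘ Sum.inr)
      = vecP ((Theta2 p k)ᵀ * A * Theta1 p k) - vecP ((Theta1 p k)ᵀ * Aᵀ * Theta2 p k) := by
    rw [← Matrix.mulVec_mulVec]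
    have hv : (ψ ∘ Sum.inr) = vecP A := by funext q; rfl
    rw [hv, kron_mulVec ((Theta2 p k)ᵀ) A (Theta1 p k)]
    rw [Matrix.sub_mulVec, Matrix.one_mulVec, hK]
    congr 1
    rw [Matrix.transpose_mul, Matrix.transpose_mul, Matrix.transpose_transpose,
      Matrix.mul_assoc]
  rw [h1, h2, show Xphi p k hkp.le ψ = blockX hkp.le B A from rfl,
    ← theta_identity hkp B A]
  rfl

end Part4

attribute [local instance] Matrix.linftyOpNormedAddCommGroup Matrix.linftyOpNormedSpace
  Matrix.linftyOpNormedRing Matrix.linftyOpNormedAlgebra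

local instance (n : ℕ) : CompleteSpace (Matrix (Fin n) (Fin n) ℝ) :=
  FiniteDimensional.complete ℝ _

section Analysis

variable {p k : ℕ}

/-- `Xphi` as a linear map. -/
def XphiL (p k : ℕ) (h : k ≤ p) :
    ((Fin (k * (k - 1) / 2) ⊕ (Fin k × Fin (p - k))) → ℝ) →ₗ[ℝ] Matrix (Fin p) (Fin p) ℝ where
  toFun := Xphi p k h
  map_add' := Xphi_add h
  map_smul' := fun r φ => Xphi_smul h r φ

/-- `M ↦ vecP (M * Ipk)` as a linear map. -/
def PL (p k : ℕ) : Matrix (Fin p) (Fin p) ℝ →ₗ[ℝ] ((Fin k × Fin p) → ℝ) where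
  toFun := fun M => vecP (M * Ipk p k)
  map_add' := fun M N => by funext q; simp [vecP, Matrix.add_mul]
  map_smul' := fun r M => by funext q; simp [vecP, Matrix.smul_mul]

def XCL (p k : ℕ) (h : k ≤ p) :
    ((Fin (k * (k - 1) / 2) ⊕ (Fin k × Fin (p - k))) → ℝ) →L[ℝ] Matrix (Fin p) (Fin p) ℝ :=
  LinearMap.toContinuousLinearMap (XphiL p k h)

def PCL (p k : ℕ) : Matrix (Fin p) (Fin p) ℝ →L[ℝ] ((Fin k × Fin p) → ℝ) :=
  LinearMap.toContinuousLinearMap (PL p k)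

def gfun (p : ℕ) : Matrix (Fin p) (Fin p) ℝ → Matrix (Fin p) (Fin p) ℝ :=
  fun X => (1 + X) * Ring.inverse (1 - X)

@[simp] lemma XCL_apply (h : k ≤ p) (φ) : XCL p k h φ = Xphi p k h φ := rfl

@[simp] lemma PCL_apply (M : Matrix (Fin p) (Fin p) ℝ) : PCL p k M = vecP (M * Ipk p k) := rfl

lemma cayley_eq_comp (hkp : k ≤ p) :
    (fun ψ : (Fin (k * (k - 1) / 2) ⊕ (Fin k × Fin (p - k))) → ℝ =>
      vecP (cayley p k (Xphi p k hkp ψ)))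
      = fun ψ => PCL p k (gfun p (XCL p k hkp ψ)) := by
  funext ψ
  simp only [PCL_apply, XCL_apply, gfun, cayley, Matrix.nonsing_inv_eq_ringInverse]

lemma cayley_contDiff (hkp : k < p) :
    ContDiff ℝ 1 (fun ψ : (Fin (k * (k - 1) / 2) ⊕ (Fin k × Fin (p - k))) → ℝ =>
      vecP (cayley p k (Xphi p k hkp.le ψ))) := by
  rw [cayley_eq_comp hkp.le]
  refine contDiff_iff_contDiffAt.2 fun φ => ?_
  have hu : IsUnit (1 - Xphi p k hkp.le φ) := isUnit_one_sub_skew _ (Xphi_skew hkp.le φ)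
  have hinv : ContDiffAt ℝ 1 (Ring.inverse : Matrix (Fin p) (Fin p) ℝ → _)
      (1 - Xphi p k hkp.le φ) := by
    have h := contDiffAt_ringInverse ℝ (n := 1) hu.unit
    rwa [hu.unit_spec] at h
  have hgc : ContDiffAt ℝ 1 (gfun p) (XCL p k hkp.le φ) := by
    refine ContDiffAt.mul ?_ ?_
    · exact (contDiff_const.add contDiff_id).contDiffAt
    · exact hinv.comp _ ((contDiff_const.sub contDiff_id).contDiffAt)
  exact ((PCL p k).contDiff.contDiffAt).comp _ (hgc.comp φ ((XCL p k hkp.le).contDiff.contDiffAt))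

lemma cayley_hasFDerivAt (hkp : k < p)
    (K : Matrix (Fin p × Fin p) (Fin p × Fin p) ℝ)
    (hK : ∀ M : Matrix (Fin p) (Fin p) ℝ, K *ᵥ vecP M = vecP Mᵀ)
    (Dt : Matrix (Fin k × Fin k) (Fin (k * (k - 1) / 2)) ℝ)
    (hDt : ∀ B : Matrix (Fin k) (Fin k) ℝ, Bᵀ = -B → Dt *ᵥ subdiagVec B = vecP B)
    (φ : (Fin (k * (k - 1) / 2) ⊕ (Fin k × Fin (p - k))) → ℝ) :
    HasFDerivAt (fun ψ : (Fin (k * (k - 1) / 2) ⊕ (Fin k × Fin (p - k))) → ℝ =>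
        vecP (cayley p k (Xphi p k hkp.le ψ)))
      (LinearMap.toContinuousLinearMap (Matrix.toLin'
        ((2 : ℝ) • ((((Ipk p k)ᵀ * ((1 - Xphi p k hkp.le φ)ᵀ)⁻¹) ⊗ₖ
            (1 - Xphi p k hkp.le φ)⁻¹) * GammaV p k K Dt)))) φ := by
  rw [cayley_eq_comp hkp.le]
  have hu : IsUnit (1 - Xphi p k hkp.le φ) := isUnit_one_sub_skew _ (Xphi_skew hkp.le φ)
  have hdet : IsUnit (1 - Xphi p k hkp.le φ).det :=
    (Matrix.isUnit_iff_isUnit_det _).1 hu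
  have hw1 : (1 - Xphi p k hkp.le φ) * (1 - Xphi p k hkp.le φ)⁻¹ = 1 :=
    Matrix.mul_nonsing_inv _ hdet
  have hw2 : (1 - Xphi p k hkp.le φ)⁻¹ * (1 - Xphi p k hkp.le φ) = 1 :=
    Matrix.nonsing_inv_mul _ hdet
  have hwu : (↑hu.unit⁻¹ : Matrix (Fin p) (Fin p) ℝ) = (1 - Xphi p k hkp.le φ)⁻¹ := by
    rw [Matrix.coe_units_inv, hu.unit_spec]
  have ha : HasFDerivAt (fun X : Matrix (Fin p) (Fin p) ℝ => 1 + X)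
      (ContinuousLinearMap.id ℝ _) (XCL p k hkp.le φ) := by
    exact (hasFDerivAt_id (XCL p k hkp.le φ)).const_add (1 : Matrix (Fin p) (Fin p) ℝ)
  have hb0 : HasFDerivAt (fun X : Matrix (Fin p) (Fin p) ℝ => 1 - X)
      (-(ContinuousLinearMap.id ℝ _)) (XCL p k hkp.le φ) :=
    (hasFDerivAt_id (XCL p k hkp.le φ)).const_sub (1 : Matrix (Fin p) (Fin p) ℝ)
  have hinv : HasFDerivAt Ring.inverse
      (-(ContinuousLinearMap.mulLeftRight ℝ (Matrix (Fin p) (Fin p) ℝ)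
        (1 - Xphi p k hkp.le φ)⁻¹ (1 - Xphi p k hkp.le φ)⁻¹)) (1 - Xphi p k hkp.le φ) := by
    have h := hasFDerivAt_ringInverse (𝕜 := ℝ) hu.unit
    rw [hwu, hu.unit_spec] at h
    exact h
  have hb : HasFDerivAt (fun X : Matrix (Fin p) (Fin p) ℝ => Ring.inverse (1 - X))
      ((-(ContinuousLinearMap.mulLeftRight ℝ (Matrix (Fin p) (Fin p) ℝ)
          (1 - Xphi p k hkp.le φ)⁻¹ (1 - Xphi p k hkp.le φ)⁻¹)).comp
        (-(ContinuousLinearMap.id ℝ (Matrix (Fin p) (Fin p) ℝ)))) (XCL p k hkp.le φ) :=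
    hinv.comp _ hb0
  have h5 := ha.mul' hb
  have h6 := h5.comp φ (XCL p k hkp.le).hasFDerivAt
  have h7 := (PCL p k).hasFDerivAt.comp φ h6
  refine h7.congr_fderiv ?hEq
  case hEq =>
    apply ContinuousLinearMap.ext
    intro ψ
    have hca : (1 + Xphi p k hkp.le φ) * (1 - Xphi p k hkp.le φ)⁻¹
        = (1 - Xphi p k hkp.le φ)⁻¹ * (1 + Xphi p k hkp.le φ) := by
      have hc : (1 + Xphi p k hkp.le φ) * (1 - Xphi p k hkp.le φ)
          = (1 - Xphi p k hkp.le φ) * (1 + Xphi p k hkp.le φ) := by noncomm_ring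
      calc (1 + Xphi p k hkp.le φ) * (1 - Xphi p k hkp.le φ)⁻¹
          = ((1 - Xphi p k hkp.le φ)⁻¹ * (1 - Xphi p k hkp.le φ)) *
            ((1 + Xphi p k hkp.le φ) * (1 - Xphi p k hkp.le φ)⁻¹) := by rw [hw2, one_mul]
        _ = (1 - Xphi p k hkp.le φ)⁻¹ *
            (((1 - Xphi p k hkp.le φ) * (1 + Xphi p k hkp.le φ)) *
              (1 - Xphi p k hkp.le φ)⁻¹) := by noncomm_ring
        _ = (1 - Xphi p k hkp.le φ)⁻¹ *
            (((1 + Xphi p k hkp.le φ) * (1 - Xphi p k hkp.le φ)) *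
              (1 - Xphi p k hkp.le φ)⁻¹) := by rw [hc]
        _ = ((1 - Xphi p k hkp.le φ)⁻¹ * (1 + Xphi p k hkp.le φ)) *
            ((1 - Xphi p k hkp.le φ) * (1 - Xphi p k hkp.le φ)⁻¹) := by noncomm_ring
        _ = (1 - Xphi p k hkp.le φ)⁻¹ * (1 + Xphi p k hkp.le φ) := by rw [hw1, mul_one]
    have htwo : (1 + Xphi p k hkp.le φ) + (1 - Xphi p k hkp.le φ)
        = (2 : ℝ) • (1 : Matrix (Fin p) (Fin p) ℝ) := by
      rw [two_smul]
      abel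
    have key : ∀ H : Matrix (Fin p) (Fin p) ℝ,
        (1 + Xphi p k hkp.le φ) * ((1 - Xphi p k hkp.le φ)⁻¹ * H * (1 - Xphi p k hkp.le φ)⁻¹)
          + H * (1 - Xphi p k hkp.le φ)⁻¹
        = (2 : ℝ) • ((1 - Xphi p k hkp.le φ)⁻¹ * H * (1 - Xphi p k hkp.le φ)⁻¹) := by
      intro H
      calc (1 + Xphi p k hkp.le φ) *
            ((1 - Xphi p k hkp.le φ)⁻¹ * H * (1 - Xphi p k hkp.le φ)⁻¹)
            + H * (1 - Xphi p k hkp.le φ)⁻¹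
          = ((1 + Xphi p k hkp.le φ) * (1 - Xphi p k hkp.le φ)⁻¹) *
              (H * (1 - Xphi p k hkp.le φ)⁻¹)
            + ((1 - Xphi p k hkp.le φ)⁻¹ * (1 - Xphi p k hkp.le φ)) *
              (H * (1 - Xphi p k hkp.le φ)⁻¹) := by rw [hw2]; noncomm_ring
        _ = ((1 - Xphi p k hkp.le φ)⁻¹ *
              ((1 + Xphi p k hkp.le φ) + (1 - Xphi p k hkp.le φ))) *
              (H * (1 - Xphi p k hkp.le φ)⁻¹) := by rw [hca]; noncomm_ring
        _ = ((1 - Xphi p k hkp.le φ)⁻¹ * ((2 : ℝ) • (1 : Matrix (Fin p) (Fin p) ℝ))) *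
              (H * (1 - Xphi p k hkp.le φ)⁻¹) := by rw [htwo]
        _ = (2 : ℝ) • ((1 - Xphi p k hkp.le φ)⁻¹ * H * (1 - Xphi p k hkp.le φ)⁻¹) := by
            rw [mul_smul_comm, mul_one, smul_mul_assoc, mul_assoc]
    -- unfold the left-hand side application
    simp only [ContinuousLinearMap.coe_comp', Function.comp_apply,
      ContinuousLinearMap.add_apply, ContinuousLinearMap.smul_apply,
      ContinuousLinearMap.neg_apply, ContinuousLinearMap.id_apply,
      ContinuousLinearMap.smulRight_apply, ContinuousLinearMap.mulLeftRight_apply,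
      LinearMap.coe_toContinuousLinearMap', XCL_apply, PCL_apply, smul_eq_mul,
      mul_neg, neg_mul, neg_neg, Matrix.toLin'_apply]
    rw [← Matrix.nonsing_inv_eq_ringInverse]
    show vecP (((1 + Xphi p k hkp.le φ) * -((1 - Xphi p k hkp.le φ)⁻¹ * -Xphi p k hkp.le ψ *
      (1 - Xphi p k hkp.le φ)⁻¹) + Xphi p k hkp.le ψ * (1 - Xphi p k hkp.le φ)⁻¹) * Ipk p k) = _
    simp only [mul_neg, neg_mul, neg_neg]
    rw [key (Xphi p k hkp.le ψ)]
    -- right-hand side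
    rw [Matrix.smul_mulVec, ← Matrix.mulVec_mulVec,
      gammaV_mulVec hkp K hK Dt hDt ψ]
    have hfact : (Ipk p k)ᵀ * ((1 - Xphi p k hkp.le φ)ᵀ)⁻¹
        = ((1 - Xphi p k hkp.le φ)⁻¹ * Ipk p k)ᵀ := by
      rw [Matrix.transpose_mul, Matrix.transpose_nonsing_inv]
    rw [hfact, kron_mulVec ((1 - Xphi p k hkp.le φ)⁻¹) (Xphi p k hkp.le ψ)
      ((1 - Xphi p k hkp.le φ)⁻¹ * Ipk p k)]
    rw [Matrix.smul_mul, Matrix.mul_assoc]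
    rfl

end Analysis

/-- The vectorized Cayley transform `φ ↦ vec (C(X_φ))` is continuously
differentiable with derivative matrix
`DC(φ) = 2 [I_{p×k}ᵀ (I - X_φ)⁻ᵀ ⊗ (I - X_φ)⁻¹] Γ_V`. -/
theorem cayley_deriv_matrix (p k : ℕ) (hk : 0 < k) (hkp : k < p)
    (K : Matrix (Fin p × Fin p) (Fin p × Fin p) ℝ)
    (hK : ∀ M : Matrix (Fin p) (Fin p) ℝ, K *ᵥ vecP M = vecP Mᵀ)
    (Dt : Matrix (Fin k × Fin k) (Fin (k * (k - 1) / 2)) ℝ)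
    (hDt : ∀ B : Matrix (Fin k) (Fin k) ℝ, Bᵀ = -B →
      Dt *ᵥ subdiagVec B = vecP B) :
    ContDiff ℝ 1 (fun φ : (Fin (k * (k - 1) / 2) ⊕ (Fin k × Fin (p - k))) → ℝ =>
      vecP (cayley p k (Xphi p k hkp.le φ))) ∧
    ∀ φ : (Fin (k * (k - 1) / 2) ⊕ (Fin k × Fin (p - k))) → ℝ,
      LinearMap.toMatrix' (fderiv ℝ
          (fun ψ : (Fin (k * (k - 1) / 2) ⊕ (Fin k × Fin (p - k))) → ℝ =>
            vecP (cayley p k (Xphi p k hkp.le ψ))) φ).toLinearMap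
        = (2 : ℝ) • ((((Ipk p k)ᵀ * ((1 - Xphi p k hkp.le φ)ᵀ)⁻¹) ⊗ₖ
            (1 - Xphi p k hkp.le φ)⁻¹) * GammaV p k K Dt) := by
  constructor
  · exact cayley_contDiff hkp
  · intro φ
    rw [(cayley_hasFDerivAt hkp K hK Dt hDt φ).fderiv]
    rw [LinearMap.coe_toContinuousLinearMap, LinearMap.toMatrix'_toLin']

end
end

section
/- Let k ≤ p be positive integers. Suppose Q and Q' are p×k real matrices with QᵀQ = Q'ᵀQ' = I_k, whose top k×k blocks Q₁ and Q₁' are both symmetric positive definite, and whose column spaces are equal (i.e., the ranges of the linear maps x ↦ Qx and x ↦ Q'x from ℝ^k to ℝ^p coincide). Then Q = Q'. -/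
open Matrix MeasureTheory Filter
open scoped Kronecker ENNReal

noncomputable section

/-- If two matrices agree as linear maps, they are equal. -/
lemma ext_of_mulVec_eq {m n : ℕ} {M N : Matrix (Fin m) (Fin n) ℝ}
    (h : ∀ x, M *ᵥ x = N *ᵥ x) : M = N := by
  ext i j
  have := congrFun (h (Pi.single j 1)) i
  simpa using this

/-- Projection lemma: if the range of `Q'` is contained in the range of `Q`
and `Qᵀ Q = 1`, then `Q Qᵀ Q' = Q'`. -/
lemma proj_eq {p k : ℕ} {Q Q' : Matrix (Fin p) (Fin k) ℝ}
    (hQ : Qᵀ * Q = 1)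
    (hsub : LinearMap.range Q'.mulVecLin ≤ LinearMap.range Q.mulVecLin) :
    Q * Qᵀ * Q' = Q' := by
  apply ext_of_mulVec_eq
  intro x
  obtain ⟨c, hc⟩ := hsub ⟨x, rfl⟩
  simp only [Matrix.mulVecLin_apply] at hc
  calc (Q * Qᵀ * Q') *ᵥ x = (Q * Qᵀ) *ᵥ (Q' *ᵥ x) := by
        rw [Matrix.mulVec_mulVec]
    _ = (Q * Qᵀ) *ᵥ (Q *ᵥ c) := by rw [hc]
    _ = (Q * Qᵀ * Q) *ᵥ c := by rw [Matrix.mulVec_mulVec]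
    _ = Q *ᵥ c := by rw [Matrix.mul_assoc, hQ, Matrix.mul_one]
    _ = Q' *ᵥ x := hc


/-- The column-space map is injective on `V⁺(k,p)`: two orthogonal `p × k`
matrices whose top `k × k` blocks are symmetric positive definite and whose
column spaces coincide must be equal. -/
theorem columnSpace_injOn_Vplus (p k : ℕ) (hk : 0 < k) (hkp : k ≤ p)
    (Q Q' : Matrix (Fin p) (Fin k) ℝ)
    (hQ : Qᵀ * Q = 1) (hQ' : Q'ᵀ * Q' = 1)
    (hpd : (topBlock hkp Q).PosDef) (hpd' : (topBlock hkp Q').PosDef)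
    (hrange : LinearMap.range Q.mulVecLin = LinearMap.range Q'.mulVecLin) :
    Q = Q' := by
  -- `U := Qᵀ Q'` carries `Q` to `Q'`.
  set U : Matrix (Fin k) (Fin k) ℝ := Qᵀ * Q' with hU
  have h1 : Q * U = Q' := by
    rw [hU, ← Matrix.mul_assoc]; exact proj_eq hQ hrange.ge
  have h2 : Q' * (Q'ᵀ * Q) = Q := by
    rw [← Matrix.mul_assoc]; exact proj_eq hQ' hrange.le
  -- `U` is orthogonal.
  have hUo : Uᵀ * U = 1 := by
    have ht : Uᵀ = Q'ᵀ * Q := by rw [hU, Matrix.transpose_mul, Matrix.transpose_transpose]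
    calc Uᵀ * U = Q'ᵀ * (Q * Qᵀ * Q') := by
          rw [ht, hU, Matrix.mul_assoc, ← Matrix.mul_assoc Q Qᵀ Q']
      _ = Q'ᵀ * Q' := by rw [proj_eq hQ hrange.ge]
      _ = 1 := hQ'
  have hUUt : U * Uᵀ = 1 := mul_eq_one_comm.mp hUo
  -- top blocks
  have htop : topBlock hkp Q' = topBlock hkp Q * U := by
    rw [← h1]
    ext i j
    simp [topBlock, Matrix.mul_apply]
  set A := topBlock hkp Q with hA
  set B := topBlock hkp Q' with hB
  have hAsym : Aᵀ = A := by
    have := hpd.1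
    rw [Matrix.IsHermitian] at this
    simpa using this
  have hBsym : Bᵀ = B := by
    have := hpd'.1
    rw [Matrix.IsHermitian] at this
    simpa using this
  have hsq : A ^ 2 = B ^ 2 := by
    have h3 : B * Bᵀ = A * Aᵀ := by
      rw [htop, Matrix.transpose_mul, hAsym, Matrix.mul_assoc,
        ← Matrix.mul_assoc U Uᵀ A, hUUt, Matrix.one_mul]
    calc A ^ 2 = A * Aᵀ := by rw [pow_two, hAsym]
      _ = B * Bᵀ := h3.symm
      _ = B ^ 2 := by rw [pow_two, hBsym]
  have hAB : A = B := by
    open scoped MatrixOrder in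
    exact (CFC.sq_eq_sq_iff A B (Matrix.nonneg_iff_posSemidef.mpr hpd.posSemidef)
      (Matrix.nonneg_iff_posSemidef.mpr hpd'.posSemidef)).mp hsq
  have hUone : U = 1 := by
    have hAU : A * U = A := by rw [← htop, ← hAB]
    have : A⁻¹ * (A * U) = A⁻¹ * A := by rw [hAU]
    rwa [← Matrix.mul_assoc, Matrix.nonsing_inv_mul A (isUnit_iff_ne_zero.mpr hpd.det_pos.ne'), Matrix.one_mul] at this
  rw [← h1, hUone, Matrix.mul_one]

end
end

section
/- Let k < p be positive integers and let Q = [Q₁ᵀ Q₂ᵀ]ᵀ be a p×k real matrix with QᵀQ = I_k whose top k×k block Q₁ is symmetric positive definite. Then I_k + Q₁ is invertible, and defining F = (I_k − Q₁)(I_k + Q₁)⁻¹ and A = ½ Q₂ (I_k + F), the matrix I_k − AᵀA is symmetric positive definite (equivalently, every eigenvalue of AᵀA lies in [0,1)). -/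
open Matrix MeasureTheory Filter
open scoped Kronecker ENNReal

noncomputable section

lemma posDef_conj_aux {n : ℕ} {M B : Matrix (Fin n) (Fin n) ℝ} (hM : M.PosDef)
    (hB : IsUnit B) : (Bᵀ * M * B).PosDef := by
  refine Matrix.PosDef.of_dotProduct_mulVec_pos ?_ ?_
  · have := Matrix.isHermitian_conjTranspose_mul_mul B hM.1
    rwa [Matrix.conjTranspose_eq_transpose_of_trivial] at this
  · intro x hx
    have hBx : B *ᵥ x ≠ 0 := by
      intro h
      exact hx (by simpa [h] using
        ((Matrix.mulVec_injective_iff_isUnit.mpr hB).eq_iff (a := x) (b := 0)).mp (by simpa using h))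
    have := hM.dotProduct_mulVec_pos hBx
    have hBconj : Bᴴ = Bᵀ := Matrix.conjTranspose_eq_transpose_of_trivial B
    simpa only [star_mulVec, Matrix.dotProduct_mulVec, Matrix.vecMul_vecMul, hBconj] using this

lemma block_sum_aux {p k : ℕ} (h : k ≤ p) (Q : Matrix (Fin p) (Fin k) ℝ) :
    (topBlock h Q)ᵀ * topBlock h Q + (botBlock h Q)ᵀ * botBlock h Q = Qᵀ * Q := by
  ext i j
  have hp : k + (p - k) = p := by omega
  simp only [Matrix.add_apply, Matrix.mul_apply, Matrix.transpose_apply, topBlock, botBlock,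
    Matrix.submatrix_apply, id]
  have e1 : ∑ l : Fin p, Q l i * Q l j
      = ∑ l : Fin (k + (p - k)), Q (Fin.cast hp l) i * Q (Fin.cast hp l) j :=
    (Fintype.sum_equiv (finCongr hp) _ _ (fun l => rfl)).symm
  rw [e1, Fin.sum_univ_add]
  refine congrArg₂ (· + ·) (Finset.sum_congr rfl fun a _ => rfl)
    (Finset.sum_congr rfl fun b _ => rfl)

/-- If `Q ∈ V⁺(k,p)` (orthogonal with symmetric positive definite top block
`Q₁`), then `I + Q₁` is invertible and, with `F = (I - Q₁)(I + Q₁)⁻¹` and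
`A = ½ Q₂ (I + F)`, the matrix `I - AᵀA` is symmetric positive definite. -/
theorem one_sub_AtA_posDef (p k : ℕ) (hk : 0 < k) (hkp : k < p)
    (Q : Matrix (Fin p) (Fin k) ℝ) (hQ : Qᵀ * Q = 1)
    (hpd : (topBlock hkp.le Q).PosDef) :
    IsUnit (1 + topBlock hkp.le Q) ∧
    (1 - ((1 / 2 : ℝ) • (botBlock hkp.le Q *
          (1 + (1 - topBlock hkp.le Q) * (1 + topBlock hkp.le Q)⁻¹)))ᵀ *
        ((1 / 2 : ℝ) • (botBlock hkp.le Q *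
          (1 + (1 - topBlock hkp.le Q) * (1 + topBlock hkp.le Q)⁻¹)))).PosDef := by
  classical
  set A₁ := topBlock hkp.le Q with hA1
  set A₂ := botBlock hkp.le Q with hA2
  have h1 : A₁ᵀ = A₁ := by
    have := hpd.1
    rwa [Matrix.IsHermitian, Matrix.conjTranspose_eq_transpose_of_trivial] at this
  have hS : (1 + A₁).PosDef := Matrix.PosDef.add Matrix.PosDef.one hpd
  have hU : IsUnit (1 + A₁) := hS.isUnit
  refine ⟨hU, ?_⟩
  set S := 1 + A₁ with hSdef
  haveI : Invertible S := hU.invertible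
  have hSS : S * S⁻¹ = 1 := Matrix.mul_inv_of_invertible S
  have hSS' : S⁻¹ * S = 1 := Matrix.inv_mul_of_invertible S
  have hSt : Sᵀ = S := by rw [hSdef, Matrix.transpose_add, Matrix.transpose_one, h1]
  have hSit : (S⁻¹)ᵀ = S⁻¹ := by rw [Matrix.transpose_nonsing_inv, hSt]
  have h2 : (1 : Matrix (Fin k) (Fin k) ℝ) + (1 - A₁) * S⁻¹
      = ((2:ℝ) • (1 : Matrix (Fin k) (Fin k) ℝ)) * S⁻¹ := by
    nth_rewrite 1 [← hSS]
    rw [← add_mul]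
    congr 1
    rw [hSdef, two_smul]
    abel
  have hA : (1 / 2 : ℝ) • (A₂ * (1 + (1 - A₁) * S⁻¹)) = A₂ * S⁻¹ := by
    rw [h2, smul_mul_assoc, one_mul, Matrix.mul_smul, smul_smul]
    norm_num
  rw [hA]
  have hQQ : A₁ᵀ * A₁ + A₂ᵀ * A₂ = 1 := by rw [block_sum_aux hkp.le Q, hQ]
  have hA2A2 : A₂ᵀ * A₂ = 1 - A₁ * A₁ := by
    rw [← hQQ, h1]; abel
  have hT : (A₂ * S⁻¹)ᵀ = S⁻¹ * A₂ᵀ := by rw [Matrix.transpose_mul, hSit]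
  have k1 : S⁻¹ * (S * S) * S⁻¹ = 1 := by
    rw [← mul_assoc S⁻¹ S S, hSS', one_mul, hSS]
  have k2 : S⁻¹ * A₂ᵀ * (A₂ * S⁻¹) = S⁻¹ * (A₂ᵀ * A₂) * S⁻¹ := by
    simp only [Matrix.mul_assoc]
  have e2 : S * S - (1 - A₁ * A₁) = (A₁ + A₁) + (A₁ * A₁ + A₁ * A₁) := by
    rw [hSdef]; noncomm_ring
  have key : 1 - (A₂ * S⁻¹)ᵀ * (A₂ * S⁻¹)
      = (S⁻¹)ᵀ * ((A₁ + A₁) + (A₁ * A₁ + A₁ * A₁)) * S⁻¹ := by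
    rw [hSit, hT, ← e2, Matrix.mul_sub, Matrix.sub_mul, k1, k2, hA2A2]
  rw [key]
  have hPSD : (A₁ * A₁ + A₁ * A₁).PosSemidef := by
    have h3 : (A₁ᵀ * A₁).PosSemidef := by
      rw [← Matrix.conjTranspose_eq_transpose_of_trivial]
      exact Matrix.posSemidef_conjTranspose_mul_self A₁
    rw [h1] at h3
    exact h3.add h3
  have hPD : ((A₁ + A₁) + (A₁ * A₁ + A₁ * A₁)).PosDef :=
    (hpd.add hpd).add_posSemidef hPSD
  exact posDef_conj_aux hPD hS.inv.isUnit

end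
end

section
/- Let k < p be positive integers and let Q = [Q₁ᵀ Q₂ᵀ]ᵀ be a p×k real matrix with QᵀQ = I_k whose top k×k block Q₁ is symmetric positive definite. Then, with F = (I_k − Q₁)(I_k + Q₁)⁻¹ and A = ½ Q₂ (I_k + F), one has the identity AᵀA = F = (I_k − Q₁)(I_k + Q₁)⁻¹. -/
open Matrix MeasureTheory Filter
open scoped Kronecker ENNReal

noncomputable section

/-- If `Q ∈ V⁺(k,p)`, then with `F = (I - Q₁)(I + Q₁)⁻¹` and
`A = ½ Q₂ (I + F)` one has `AᵀA = F`. -/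
theorem AtA_eq_F (p k : ℕ) (hk : 0 < k) (hkp : k < p)
    (Q : Matrix (Fin p) (Fin k) ℝ) (hQ : Qᵀ * Q = 1)
    (hpd : (topBlock hkp.le Q).PosDef) :
    IsUnit (1 + topBlock hkp.le Q) ∧
    ((1 / 2 : ℝ) • (botBlock hkp.le Q *
        (1 + (1 - topBlock hkp.le Q) * (1 + topBlock hkp.le Q)⁻¹)))ᵀ *
      ((1 / 2 : ℝ) • (botBlock hkp.le Q *
        (1 + (1 - topBlock hkp.le Q) * (1 + topBlock hkp.le Q)⁻¹)))
      = (1 - topBlock hkp.le Q) * (1 + topBlock hkp.le Q)⁻¹ := by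
  set S := topBlock hkp.le Q with hS
  set B := botBlock hkp.le Q with hB
  -- symmetry of S
  have hSt : Sᵀ = S := by
    have := hpd.1
    simpa [Matrix.IsHermitian, Matrix.conjTranspose_eq_transpose_of_trivial] using this
  -- 1 + S is positive definite, hence a unit
  have hTpd : (1 + S).PosDef := Matrix.PosDef.posSemidef_add Matrix.PosSemidef.one hpd
  have hTu : IsUnit (1 + S) := hTpd.isUnit
  have hTinv : (1 + S) * (1 + S)⁻¹ = 1 := Matrix.mul_nonsing_inv _
    ((Matrix.isUnit_iff_isUnit_det _).mp hTu)
  have hTinv' : (1 + S)⁻¹ * (1 + S) = 1 := Matrix.nonsing_inv_mul _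
    ((Matrix.isUnit_iff_isUnit_det _).mp hTu)
  refine ⟨hTu, ?_⟩
  -- block decomposition of Qᵀ Q
  have hblock : Sᵀ * S + Bᵀ * B = 1 := by
    rw [← hQ]
    ext i j
    simp only [Matrix.add_apply, Matrix.mul_apply, hS, hB, topBlock, botBlock,
      Matrix.transpose_apply, Matrix.submatrix_apply, id]
    have hpk : k + (p - k) = p := by omega
    rw [← Fintype.sum_equiv ((finSumFinEquiv (m := k) (n := p - k)).trans
      (finCongr hpk)) _ (fun l : Fin p => Q l i * Q l j) (fun l => rfl)]
    rw [Fintype.sum_sum_type]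
    congr 1
    all_goals refine Finset.sum_congr rfl fun l _ => ?_
    all_goals congr 2
    all_goals exact Fin.ext (by simp [Fin.natAdd])
  have hBtB : Bᵀ * B = (1 - S) * (1 + S) := by
    have h1 : Bᵀ * B = 1 - Sᵀ * S := eq_sub_of_add_eq' hblock
    rw [h1, hSt]
    noncomm_ring
  -- 1 + F = 2 (1+S)⁻¹
  have hF : 1 + (1 - S) * (1 + S)⁻¹ = (2 : ℝ) • (1 + S)⁻¹ := by
    have : (1 : Matrix (Fin k) (Fin k) ℝ) + (1 - S) * (1 + S)⁻¹
        = (1 + S) * (1 + S)⁻¹ + (1 - S) * (1 + S)⁻¹ := by rw [hTinv]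
    rw [this, ← add_mul]
    have h2 : (1 + S) + (1 - S) = (2 : ℝ) • (1 : Matrix (Fin k) (Fin k) ℝ) := by
      push_cast
      rw [two_smul]
      abel
    rw [h2, Matrix.smul_mul, Matrix.one_mul]
  -- (1+S)⁻¹ is symmetric
  have hTinvt : ((1 + S)⁻¹)ᵀ = (1 + S)⁻¹ := by
    rw [Matrix.transpose_nonsing_inv, Matrix.transpose_add, Matrix.transpose_one, hSt]
  have hA2 : (1 / 2 : ℝ) • (B * (1 + (1 - S) * (1 + S)⁻¹)) = B * (1 + S)⁻¹ := by
    rw [hF, Matrix.mul_smul, smul_smul]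
    norm_num
  rw [hA2, Matrix.transpose_mul, hTinvt]
  -- now: (1+S)⁻¹ * Bᵀ * (B * (1+S)⁻¹) = (1-S)(1+S)⁻¹
  calc (1 + S)⁻¹ * Bᵀ * (B * (1 + S)⁻¹)
      = (1 + S)⁻¹ * (Bᵀ * B) * (1 + S)⁻¹ := by
        simp only [Matrix.mul_assoc]
    _ = (1 + S)⁻¹ * ((1 - S) * ((1 + S) * (1 + S)⁻¹)) := by
        rw [hBtB]; simp only [Matrix.mul_assoc]
    _ = (1 + S)⁻¹ * (1 - S) := by rw [hTinv, Matrix.mul_one]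
    _ = (1 + S)⁻¹ * ((1 - S) * ((1 + S) * (1 + S)⁻¹)) := by
        rw [hTinv, Matrix.mul_one]
    _ = (1 + S)⁻¹ * ((1 + S) * ((1 - S) * (1 + S)⁻¹)) := by
        have hcomm : (1 - S) * (1 + S) = (1 + S) * (1 - S) := by noncomm_ring
        rw [← Matrix.mul_assoc (1 - S), hcomm, Matrix.mul_assoc]
    _ = (1 - S) * (1 + S)⁻¹ := by
        rw [← Matrix.mul_assoc, hTinv', Matrix.one_mul]

end
end

section
/- Let k < p be positive integers and let A be a (p−k)×k real matrix such that I_k − AᵀA is positive definite (equivalently, every eigenvalue of AᵀA lies in [0,1)). Then I_k + AᵀA is invertible and the matrix Q₁ = (I_k − AᵀA)(I_k + AᵀA)⁻¹ is symmetric positive definite. Moreover, letting X = [[0, −Aᵀ],[A, 0]] and Q = C(X) = (I_p + X)(I_p − X)⁻¹ I_{p×k}, the top k×k block of Q equals Q₁, QᵀQ = I_k, and hence Q ∈ V⁺(k,p). -/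
open Matrix MeasureTheory Filter
open scoped Kronecker ENNReal

noncomputable section

/-- Auxiliary: positive definiteness is preserved under congruence by an
invertible real matrix. -/
lemma posDef_conj_aux_s8 {n : Type*} [Fintype n] [DecidableEq n]
    {B C : Matrix n n ℝ} (hB : B.PosDef) (hC : IsUnit C) :
    (Cᵀ * B * C).PosDef := by
  have hBt : Bᵀ = B := by
    have := hB.1.eq
    rwa [Matrix.conjTranspose_eq_transpose_of_trivial] at this
  refine Matrix.PosDef.of_dotProduct_mulVec_pos ?_ ?_
  · show (Cᵀ * B * C)ᴴ = _
    rw [Matrix.conjTranspose_eq_transpose_of_trivial, Matrix.transpose_mul,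
      Matrix.transpose_mul, Matrix.transpose_transpose, hBt, Matrix.mul_assoc]
  · intro x hx
    have hinj := Matrix.mulVec_injective_iff_isUnit.mpr hC
    have hCx : C *ᵥ x ≠ 0 := by
      intro h
      exact hx (hinj (by simpa using h))
    have hpos := hB.dotProduct_mulVec_pos hCx
    have : star x ⬝ᵥ ((Cᵀ * B * C) *ᵥ x) = star (C *ᵥ x) ⬝ᵥ (B *ᵥ (C *ᵥ x)) := by
      simp only [star_trivial]
      rw [← Matrix.mulVec_mulVec, ← Matrix.mulVec_mulVec, Matrix.dotProduct_mulVec,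
        Matrix.vecMul_transpose]
    rw [this]
    exact hpos

/-- If `I - AᵀA` is positive definite, then `I + AᵀA` is invertible,
`Q₁ = (I - AᵀA)(I + AᵀA)⁻¹` is symmetric positive definite, and the Cayley
transform of `X = [[0, -Aᵀ],[A, 0]]` is an orthogonal matrix whose top block
is `Q₁`; hence `C(X) ∈ V⁺(k,p)`. -/
theorem cayley_mem_Vplus (p k : ℕ) (hk : 0 < k) (hkp : k < p)
    (A : Matrix (Fin (p - k)) (Fin k) ℝ) (hA : (1 - Aᵀ * A).PosDef) :
    IsUnit (1 + Aᵀ * A) ∧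
    ((1 - Aᵀ * A) * (1 + Aᵀ * A)⁻¹).PosDef ∧
    topBlock hkp.le (cayley p k (blockX hkp.le 0 A))
      = (1 - Aᵀ * A) * (1 + Aᵀ * A)⁻¹ ∧
    (cayley p k (blockX hkp.le 0 A))ᵀ * cayley p k (blockX hkp.le 0 A) = 1 := by
  classical
  set M : Matrix (Fin k) (Fin k) ℝ := Aᵀ * A with hMdef
  have hMpsd : M.PosSemidef := by
    have := Matrix.posSemidef_conjTranspose_mul_self A
    rwa [Matrix.conjTranspose_eq_transpose_of_trivial] at this
  have h1M : (1 + M).PosDef := Matrix.PosDef.one.add_posSemidef hMpsd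
  have hU : IsUnit (1 + M) := h1M.isUnit
  have hUdet : IsUnit (1 + M).det := (Matrix.isUnit_iff_isUnit_det _).mp hU
  set S : Matrix (Fin k) (Fin k) ℝ := (1 + M)⁻¹ with hSdef
  have hS1 : (1 + M) * S = 1 := Matrix.mul_nonsing_inv _ hUdet
  have hS2 : S * (1 + M) = 1 := Matrix.nonsing_inv_mul _ hUdet
  have hcomm : ((1 : Matrix (Fin k) (Fin k) ℝ) - M) * (1 + M) = (1 + M) * (1 - M) := by
    noncomm_ring
  have hQcomm : S * (1 - M) = (1 - M) * S := by
    calc S * (1 - M) = S * (1 - M) * ((1 + M) * S) := by rw [hS1, mul_one]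
      _ = S * ((1 - M) * (1 + M)) * S := by noncomm_ring
      _ = S * ((1 + M) * (1 - M)) * S := by rw [hcomm]
      _ = (S * (1 + M)) * ((1 - M) * S) := by noncomm_ring
      _ = (1 - M) * S := by rw [hS2, one_mul]
  -- positive definiteness of 1 - M*M
  set R : Matrix (Fin k) (Fin k) ℝ := by open scoped MatrixOrder in exact CFC.sqrt M with hRdef
  have hRR : R * R = M := by open scoped MatrixOrder in exact CFC.sqrt_mul_sqrt_self M hMpsd.nonneg
  have hRh : Rᴴ = R := by open scoped MatrixOrder in exact (CFC.sqrt_nonneg M).posSemidef.1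
  have hRMR : R * M * R = M * M := by rw [← hRR]; noncomm_ring
  have hRmid : R * (1 - M) * R = M - M * M := by
    calc R * (1 - M) * R = R * R - R * M * R := by noncomm_ring
      _ = M - M * M := by rw [hRR, hRMR]
  have hsplit : (1 : Matrix (Fin k) (Fin k) ℝ) - M * M = (1 - M) + R * (1 - M) * R := by
    rw [hRmid]; noncomm_ring
  have hMMpd : ((1 : Matrix (Fin k) (Fin k) ℝ) - M * M).PosDef := by
    rw [hsplit]
    refine hA.add_posSemidef ?_
    have := hA.posSemidef.mul_mul_conjTranspose_same R
    rwa [hRh] at this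
  -- Q₁ is positive definite
  have hSpd : S.PosDef := h1M.inv
  have hSh : Sᵀ = S := by
    have := hSpd.1.eq
    rwa [Matrix.conjTranspose_eq_transpose_of_trivial] at this
  have h1MM : (1 : Matrix (Fin k) (Fin k) ℝ) - M * M = (1 - M) * (1 + M) := by noncomm_ring
  have hkey : (1 - M) * S = Sᵀ * (1 - M * M) * S := by
    rw [hSh, h1MM]
    symm
    calc S * ((1 - M) * (1 + M)) * S = (S * (1 - M)) * ((1 + M) * S) := by noncomm_ring
      _ = ((1 - M) * S) * 1 := by rw [hQcomm, hS1]
      _ = (1 - M) * S := by rw [mul_one]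
  have hQpd : ((1 - M) * S).PosDef := by
    rw [hkey]
    exact posDef_conj_aux_s8 hMMpd hSpd.isUnit
  -- block matrix setup
  have hkk : k + (p - k) = p := by omega
  set e : Fin k ⊕ Fin (p - k) ≃ Fin p := finSumFinEquiv.trans (finCongr hkk) with hedef
  set Y : Matrix (Fin k ⊕ Fin (p - k)) (Fin k ⊕ Fin (p - k)) ℝ :=
    Matrix.fromBlocks 0 (-Aᵀ) A 0 with hYdef
  set X : Matrix (Fin p) (Fin p) ℝ := blockX hkp.le (0 : Matrix (Fin k) (Fin k) ℝ) A with hXdef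
  have hX : X = Matrix.reindex e e Y := by
    ext i j
    rfl
  -- inverse of 1 + A Aᵀ
  have hAApsd : (A * Aᵀ).PosSemidef := by
    have := Matrix.posSemidef_self_mul_conjTranspose A
    rwa [Matrix.conjTranspose_eq_transpose_of_trivial] at this
  have h1T : ((1 : Matrix (Fin (p - k)) (Fin (p - k)) ℝ) + A * Aᵀ).PosDef :=
    Matrix.PosDef.one.add_posSemidef hAApsd
  have hTdet : IsUnit ((1 : Matrix (Fin (p - k)) (Fin (p - k)) ℝ) + A * Aᵀ).det :=
    (Matrix.isUnit_iff_isUnit_det _).mp h1T.isUnit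
  set T : Matrix (Fin (p - k)) (Fin (p - k)) ℝ := (1 + A * Aᵀ)⁻¹ with hTdef2
  have hT1 : ((1 : Matrix (Fin (p - k)) (Fin (p - k)) ℝ) + A * Aᵀ) * T = 1 :=
    Matrix.mul_nonsing_inv _ hTdet
  set N : Matrix (Fin k ⊕ Fin (p - k)) (Fin k ⊕ Fin (p - k)) ℝ :=
    Matrix.fromBlocks S (-(Aᵀ * T)) (A * S) T with hNdef
  have h1mY : (1 : Matrix (Fin k ⊕ Fin (p - k)) (Fin k ⊕ Fin (p - k)) ℝ) - Y
      = Matrix.fromBlocks 1 Aᵀ (-A) 1 := by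
    rw [hYdef, sub_eq_add_neg, ← Matrix.fromBlocks_one, Matrix.fromBlocks_neg,
      Matrix.fromBlocks_add]
    congr 1 <;> simp
  have h1pY : (1 : Matrix (Fin k ⊕ Fin (p - k)) (Fin k ⊕ Fin (p - k)) ℝ) + Y
      = Matrix.fromBlocks 1 (-Aᵀ) A 1 := by
    rw [hYdef, ← Matrix.fromBlocks_one, Matrix.fromBlocks_add]
    congr 1 <;> simp
  have hTL : (1 : Matrix (Fin k) (Fin k) ℝ) * S + Aᵀ * (A * S) = 1 := by
    have h : (1 : Matrix (Fin k) (Fin k) ℝ) * S + Aᵀ * (A * S) = (1 + Aᵀ * A) * S := by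
      simp only [one_mul, add_mul, Matrix.mul_assoc]
    rw [h, ← hMdef, hS1]
  have hBR : (-A) * (-(Aᵀ * T)) + (1 : Matrix (Fin (p - k)) (Fin (p - k)) ℝ) * T = 1 := by
    have h : (-A) * (-(Aᵀ * T)) + (1 : Matrix (Fin (p - k)) (Fin (p - k)) ℝ) * T
        = (1 + A * Aᵀ) * T := by
      simp only [Matrix.neg_mul, Matrix.mul_neg, neg_neg, Matrix.one_mul, Matrix.add_mul,
        Matrix.mul_assoc]
      rw [add_comm]
    rw [h, hT1]
  have hNleft : Matrix.fromBlocks (1 : Matrix (Fin k) (Fin k) ℝ) Aᵀ (-A) 1 * N = 1 := by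
    rw [hNdef, Matrix.fromBlocks_multiply, ← Matrix.fromBlocks_one]
    exact Matrix.fromBlocks_inj.mpr ⟨hTL, by simp, by simp, hBR⟩
  have hNY : ((1 : Matrix (Fin k ⊕ Fin (p - k)) (Fin k ⊕ Fin (p - k)) ℝ) - Y) * N = 1 := by
    rw [h1mY]; exact hNleft
  have hNinv : ((1 : Matrix (Fin k ⊕ Fin (p - k)) (Fin k ⊕ Fin (p - k)) ℝ) - Y)⁻¹ = N :=
    Matrix.inv_eq_right_inv hNY
  -- the top-left block of (1+Y) * N
  have hTL2 : (1 : Matrix (Fin k) (Fin k) ℝ) * S + (-Aᵀ) * (A * S) = (1 - M) * S := by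
    rw [hMdef]
    simp only [Matrix.one_mul, Matrix.neg_mul, Matrix.sub_mul, Matrix.mul_assoc]
    rw [sub_eq_add_neg]
  have hG : ((1 : Matrix (Fin k ⊕ Fin (p - k)) (Fin k ⊕ Fin (p - k)) ℝ) + Y) * N
      = Matrix.fromBlocks ((1 - M) * S)
          ((1 : Matrix (Fin k) (Fin k) ℝ) * (-(Aᵀ * T)) + (-Aᵀ) * T)
          (A * S + (1 : Matrix (Fin (p - k)) (Fin (p - k)) ℝ) * (A * S))
          (A * (-(Aᵀ * T)) + (1 : Matrix (Fin (p - k)) (Fin (p - k)) ℝ) * T) := by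
    rw [h1pY, hNdef, Matrix.fromBlocks_multiply, hTL2]
  -- orthogonality at the block level
  have hYt : Yᵀ = -Y := by
    rw [hYdef]
    simp [Matrix.fromBlocks_transpose, Matrix.fromBlocks_neg]
  have h1pYt : ((1 : Matrix (Fin k ⊕ Fin (p - k)) (Fin k ⊕ Fin (p - k)) ℝ) + Y)ᵀ = 1 - Y := by
    rw [Matrix.transpose_add, Matrix.transpose_one, hYt, ← sub_eq_add_neg]
  have h1mYt : ((1 : Matrix (Fin k ⊕ Fin (p - k)) (Fin k ⊕ Fin (p - k)) ℝ) - Y)ᵀ = 1 + Y := by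
    rw [Matrix.transpose_sub, Matrix.transpose_one, hYt, sub_neg_eq_add]
  have hNt : Nᵀ * ((1 : Matrix (Fin k ⊕ Fin (p - k)) (Fin k ⊕ Fin (p - k)) ℝ) + Y) = 1 := by
    have h := congrArg Matrix.transpose hNY
    rw [Matrix.transpose_mul, Matrix.transpose_one, h1mYt] at h
    exact h
  have hcommY : ((1 : Matrix (Fin k ⊕ Fin (p - k)) (Fin k ⊕ Fin (p - k)) ℝ) - Y) * (1 + Y)
      = (1 + Y) * (1 - Y) := by noncomm_ring
  have hGG : (((1 : Matrix (Fin k ⊕ Fin (p - k)) (Fin k ⊕ Fin (p - k)) ℝ) + Y) * N)ᵀ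
      * ((1 + Y) * N) = 1 := by
    calc (((1 : Matrix (Fin k ⊕ Fin (p - k)) (Fin k ⊕ Fin (p - k)) ℝ) + Y) * N)ᵀ
        * ((1 + Y) * N)
        = Nᵀ * (((1 + Y)ᵀ * (1 + Y)) * N) := by
          rw [Matrix.transpose_mul]; noncomm_ring
      _ = Nᵀ * (((1 - Y) * (1 + Y)) * N) := by rw [h1pYt]
      _ = Nᵀ * ((1 + Y) * ((1 - Y) * N)) := by rw [hcommY, Matrix.mul_assoc]
      _ = Nᵀ * (1 + Y) := by rw [hNY, mul_one]
      _ = 1 := hNt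
  -- transporting along the reindexing
  have hIpk : Ipk p k = (1 : Matrix (Fin p) (Fin p) ℝ).submatrix id (Fin.castLE hkp.le) := by
    ext i j
    simp [Ipk, Matrix.one_apply, Fin.ext_iff]
  have hcay : cayley p k X = ((1 + X) * (1 - X)⁻¹).submatrix id (Fin.castLE hkp.le) := by
    rw [cayley, hIpk]
    have h := Matrix.mul_submatrix_one (Equiv.refl (Fin p)) (Fin.castLE hkp.le)
      ((1 + X) * (1 - X)⁻¹)
    simpa using h
  have hadd : (1 : Matrix (Fin p) (Fin p) ℝ) + X = Matrix.reindex e e (1 + Y) := by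
    rw [hX]
    ext i j
    simp [Matrix.one_apply, Equiv.eq_symm_apply]
  have hsub : (1 : Matrix (Fin p) (Fin p) ℝ) - X = Matrix.reindex e e (1 - Y) := by
    rw [hX]
    ext i j
    simp [Matrix.one_apply, Matrix.sub_apply, Equiv.eq_symm_apply]
  have hinvX : ((1 : Matrix (Fin p) (Fin p) ℝ) - X)⁻¹ = Matrix.reindex e e N := by
    rw [hsub, Matrix.inv_reindex, hNinv]
  have hPbig : ((1 : Matrix (Fin p) (Fin p) ℝ) + X) * (1 - X)⁻¹
      = Matrix.reindex e e ((1 + Y) * N) := by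
    rw [hadd, hinvX]
    simp [Matrix.reindex_apply]
  have hei : ∀ i : Fin k, e.symm (Fin.castLE hkp.le i) = Sum.inl i := by
    intro i
    rw [Equiv.symm_apply_eq]
    apply Fin.ext
    simp [hedef]
  refine ⟨hU, hQpd, ?_, ?_⟩
  · rw [topBlock, hcay, hPbig, hG]
    ext i j
    simp only [Matrix.submatrix_apply, Matrix.reindex_apply, id_eq]
    rw [hei i, hei j]
    rfl
  · rw [hcay, Matrix.transpose_submatrix, hPbig]
    have h := Matrix.submatrix_mul_equiv
      ((Matrix.reindex e e ((1 + Y) * N))ᵀ) (Matrix.reindex e e ((1 + Y) * N))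
      (Fin.castLE hkp.le) (Equiv.refl (Fin p)) (Fin.castLE hkp.le)
    simp only [Equiv.coe_refl] at h
    rw [h]
    have hPP : (Matrix.reindex e e ((1 + Y) * N))ᵀ * Matrix.reindex e e ((1 + Y) * N)
        = 1 := by
      rw [Matrix.transpose_reindex]
      simp only [Matrix.reindex_apply, Matrix.submatrix_mul_equiv]
      rw [hGG]
      exact Matrix.submatrix_one_equiv e.symm
    rw [hPP, Matrix.submatrix_one _ (Fin.castLE_injective hkp.le)]

end
end

section
/- Let k < p be positive integers and let A be a (p−k)×k real matrix with I_k − AᵀA positive definite. Let Q = C(X) where X = [[0, −Aᵀ],[A, 0]], and write Q = [Q₁ᵀ Q₂ᵀ]ᵀ with Q₁ the top k×k block. Then I_k + Q₁ is invertible and, setting F = (I_k − Q₁)(I_k + Q₁)⁻¹, one recovers A = ½ Q₂ (I_k + F). Consequently the Cayley transform is injective on the set of block matrices [[0, −Aᵀ],[A, 0]] with I_k − AᵀA positive definite. -/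
open Matrix MeasureTheory Filter
open scoped Kronecker ENNReal

noncomputable section

/-- Auxiliary equivalence splitting `Fin p` as `Fin k ⊕ Fin (p - k)`. -/
def esum (p k : ℕ) (h : k ≤ p) : Fin p ≃ Fin k ⊕ Fin (p - k) :=
  (finCongr (Nat.add_sub_cancel' h).symm).trans finSumFinEquiv.symm

lemma blockX_eq {p k : ℕ} (h : k ≤ p) (B : Matrix (Fin k) (Fin k) ℝ)
    (A : Matrix (Fin (p - k)) (Fin k) ℝ) :
    blockX h B A = (Matrix.fromBlocks B (-Aᵀ) A 0).submatrix (esum p k h) (esum p k h) := rfl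

lemma esum_inl {p k : ℕ} (h : k ≤ p) (j : Fin k) :
    esum p k h (Fin.castLE h j) = Sum.inl j := by
  rw [esum, Equiv.trans_apply, Equiv.symm_apply_eq]
  apply Fin.ext
  simp

lemma esum_inr {p k : ℕ} (h : k ≤ p) (i : Fin (p - k)) (pf : k + i.1 < p) :
    esum p k h ⟨k + i.1, pf⟩ = Sum.inr i := by
  rw [esum, Equiv.trans_apply, Equiv.symm_apply_eq]
  apply Fin.ext
  simp

lemma Ipk_eq {p k : ℕ} (h : k ≤ p) :
    Ipk p k = (1 : Matrix (Fin k ⊕ Fin (p - k)) (Fin k ⊕ Fin (p - k)) ℝ).submatrix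
      (esum p k h) Sum.inl := by
  ext i j
  by_cases hc : (i : ℕ) = (j : ℕ)
  · have hi : i = Fin.castLE h j := Fin.ext hc
    simp [Ipk, hi, esum_inl, Matrix.one_apply]
  · have : esum p k h i ≠ Sum.inl j := by
      intro hh
      apply hc
      have := (esum p k h).injective (hh.trans (esum_inl h j).symm)
      exact congrArg Fin.val this
    simp [Ipk, hc, Matrix.one_apply, this]

lemma submatrix_fb11 {a b c d : ℕ} (A : Matrix (Fin a) (Fin c) ℝ) (B : Matrix (Fin a) (Fin d) ℝ)
    (C : Matrix (Fin b) (Fin c) ℝ) (D : Matrix (Fin b) (Fin d) ℝ) :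
    (fromBlocks A B C D).submatrix Sum.inl Sum.inl = A := by
  ext i j; simp

lemma submatrix_fb21 {a b c d : ℕ} (A : Matrix (Fin a) (Fin c) ℝ) (B : Matrix (Fin a) (Fin d) ℝ)
    (C : Matrix (Fin b) (Fin c) ℝ) (D : Matrix (Fin b) (Fin d) ℝ) :
    (fromBlocks A B C D).submatrix Sum.inr Sum.inl = C := by
  ext i j; simp

/-- The key reconstruction lemma. -/
lemma cayley_key {p k : ℕ} (hkp : k < p) (A : Matrix (Fin (p - k)) (Fin k) ℝ) :
    IsUnit (1 + topBlock hkp.le (cayley p k (blockX hkp.le 0 A))) ∧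
    A = (1 / 2 : ℝ) • (botBlock hkp.le (cayley p k (blockX hkp.le 0 A)) *
      (1 + (1 - topBlock hkp.le (cayley p k (blockX hkp.le 0 A))) *
        (1 + topBlock hkp.le (cayley p k (blockX hkp.le 0 A)))⁻¹)) := by
  set e := esum p k hkp.le with he
  set T : Matrix (Fin k) (Fin k) ℝ := 1 + Aᵀ * A with hTdef
  set S : Matrix (Fin k) (Fin k) ℝ := T⁻¹ with hSdef
  -- invertibility of T
  have hTpd : T.PosDef := by
    have h2 : (Aᵀ * A).PosSemidef := by
      have := Matrix.posSemidef_conjTranspose_mul_self A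
      rwa [Matrix.conjTranspose_eq_transpose_of_trivial] at this
    exact Matrix.PosDef.one.add_posSemidef h2
  have hTdet : IsUnit T.det := hTpd.det_pos.ne'.isUnit
  have hST : S * T = 1 := Matrix.nonsing_inv_mul T hTdet
  have hTS : T * S = 1 := Matrix.mul_nonsing_inv T hTdet
  set M : Matrix (Fin k ⊕ Fin (p - k)) (Fin k ⊕ Fin (p - k)) ℝ :=
    fromBlocks 0 (-Aᵀ) A 0 with hM
  -- inverse of 1 - M
  have key : S + Aᵀ * A * S = 1 := by
    calc S + Aᵀ * A * S = T * S := by rw [hTdef, Matrix.add_mul, Matrix.one_mul]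
      _ = 1 := hTS
  have hinvM : (1 - M)⁻¹ = fromBlocks S (-(S * Aᵀ)) (A * S) (1 - A * S * Aᵀ) := by
    apply Matrix.inv_eq_right_inv
    have h1 : (1 : Matrix (Fin k ⊕ Fin (p - k)) (Fin k ⊕ Fin (p - k)) ℝ) - M
        = fromBlocks 1 Aᵀ (-A) 1 := by
      rw [hM, ← Matrix.fromBlocks_one]
      ext (i | i) (j | j) <;> simp [Matrix.one_apply]
    have h11 : (1 : Matrix (Fin k) (Fin k) ℝ) * S + Aᵀ * (A * S) = 1 := by
      rw [Matrix.one_mul, ← Matrix.mul_assoc]; exact key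
    have hAt : S * Aᵀ + Aᵀ * (A * S * Aᵀ) = Aᵀ := by
      rw [← Matrix.mul_assoc, ← Matrix.mul_assoc, ← Matrix.add_mul, key, Matrix.one_mul]
    have h12 : (1 : Matrix (Fin k) (Fin k) ℝ) * -(S * Aᵀ) + Aᵀ * (1 - A * S * Aᵀ) = 0 := by
      rw [Matrix.one_mul, Matrix.mul_sub, Matrix.mul_one]
      nth_rewrite 2 [← hAt]; abel
    have h21 : -A * S + (1 : Matrix (Fin (p - k)) (Fin (p - k)) ℝ) * (A * S) = 0 := by
      rw [Matrix.one_mul, Matrix.neg_mul, neg_add_cancel]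
    have h22 : -A * -(S * Aᵀ) + (1 : Matrix (Fin (p - k)) (Fin (p - k)) ℝ) * (1 - A * S * Aᵀ)
        = 1 := by
      rw [Matrix.neg_mul, Matrix.mul_neg, neg_neg, Matrix.one_mul, ← Matrix.mul_assoc]; abel
    rw [h1, Matrix.fromBlocks_multiply, h11, h12, h21, h22, Matrix.fromBlocks_one]
  -- the product P
  have honeM : (1 : Matrix (Fin k ⊕ Fin (p - k)) (Fin k ⊕ Fin (p - k)) ℝ) + M
      = fromBlocks 1 (-Aᵀ) A 1 := by
    rw [hM, ← Matrix.fromBlocks_one]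
    ext (i | i) (j | j) <;> simp [Matrix.one_apply]
  set P : Matrix (Fin k ⊕ Fin (p - k)) (Fin k ⊕ Fin (p - k)) ℝ := (1 + M) * (1 - M)⁻¹ with hP
  -- cayley in terms of P
  have hcay : cayley p k (blockX hkp.le 0 A) = P.submatrix e Sum.inl := by
    rw [cayley, blockX_eq, Ipk_eq hkp.le, ← he]
    have h1 : (1 : Matrix (Fin p) (Fin p) ℝ) + M.submatrix e e = (1 + M).submatrix e e := by
      ext i j
      simp [Matrix.submatrix_apply, Matrix.add_apply, Matrix.one_apply,
        EmbeddingLike.apply_eq_iff_eq]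
    have h2 : ((1 : Matrix (Fin p) (Fin p) ℝ) - M.submatrix e e)⁻¹
        = ((1 - M)⁻¹).submatrix e e := by
      have h3 : (1 : Matrix (Fin p) (Fin p) ℝ) - M.submatrix e e = (1 - M).submatrix e e := by
        ext i j
        simp [Matrix.submatrix_apply, Matrix.sub_apply, Matrix.one_apply,
          EmbeddingLike.apply_eq_iff_eq]
      rw [h3, Matrix.inv_submatrix_equiv]
    rw [h1, h2, Matrix.submatrix_mul_equiv (1 + M) (1 - M)⁻¹ _ e _,
      Matrix.submatrix_mul_equiv ((1 + M) * (1 - M)⁻¹) 1 _ e _, Matrix.mul_one, hP]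
  -- identify the blocks
  have hQ1 : topBlock hkp.le (cayley p k (blockX hkp.le 0 A)) = S - Aᵀ * A * S := by
    rw [hcay, topBlock, Matrix.submatrix_submatrix]
    have : ⇑e ∘ Fin.castLE hkp.le = Sum.inl := by
      funext i; exact esum_inl hkp.le i
    rw [this]
    simp only [Function.comp_id]
    rw [hP, honeM, hinvM, Matrix.fromBlocks_multiply, submatrix_fb11,
      Matrix.one_mul, Matrix.neg_mul, ← Matrix.mul_assoc, sub_eq_add_neg]
  have hQ2 : botBlock hkp.le (cayley p k (blockX hkp.le 0 A)) = A * S + A * S := by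
    rw [hcay, botBlock, Matrix.submatrix_submatrix]
    have : (⇑e ∘ fun i : Fin (p - k) => (⟨k + i.1, by have := i.isLt; omega⟩ : Fin p))
        = Sum.inr := by
      funext i; exact esum_inr hkp.le i _
    rw [this]
    simp only [Function.comp_id]
    rw [hP, honeM, hinvM, Matrix.fromBlocks_multiply, submatrix_fb21, Matrix.one_mul]
  -- the algebra
  have hplus : 1 + topBlock hkp.le (cayley p k (blockX hkp.le 0 A)) = S + S := by
    rw [hQ1]
    calc (1 : Matrix (Fin k) (Fin k) ℝ) + (S - Aᵀ * A * S)
        = (S + Aᵀ * A * S) + (S - Aᵀ * A * S) := by rw [key]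
      _ = S + S := by abel
  have hright : (S + S) * ((1 / 2 : ℝ) • T) = 1 := by
    rw [Matrix.mul_smul, Matrix.add_mul, hST, ← two_smul ℝ ((1 : Matrix (Fin k) (Fin k) ℝ)),
      smul_smul]
    norm_num
  have hIsUnit : IsUnit (1 + topBlock hkp.le (cayley p k (blockX hkp.le 0 A))) := by
    rw [hplus]
    exact (Matrix.isUnit_iff_isUnit_det _).mpr (Matrix.isUnit_det_of_right_inverse hright)
  refine ⟨hIsUnit, ?_⟩
  have hinv2 : (1 + topBlock hkp.le (cayley p k (blockX hkp.le 0 A)))⁻¹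
      = (1 / 2 : ℝ) • T := by
    apply Matrix.inv_eq_right_inv
    rw [hplus]; exact hright
  have e2 : 1 - topBlock hkp.le (cayley p k (blockX hkp.le 0 A))
      = Aᵀ * A * S + Aᵀ * A * S := by
    rw [hQ1]
    calc (1 : Matrix (Fin k) (Fin k) ℝ) - (S - Aᵀ * A * S)
        = (S + Aᵀ * A * S) - (S - Aᵀ * A * S) := by rw [key]
      _ = Aᵀ * A * S + Aᵀ * A * S := by abel
  have hF : (1 - topBlock hkp.le (cayley p k (blockX hkp.le 0 A))) *
      (1 + topBlock hkp.le (cayley p k (blockX hkp.le 0 A)))⁻¹ = Aᵀ * A := by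
    rw [e2, hinv2, Matrix.mul_smul, Matrix.add_mul, Matrix.mul_assoc (Aᵀ * A) S T, hST,
      Matrix.mul_one, ← two_smul ℝ (Aᵀ * A), smul_smul]
    norm_num
  rw [hF, hQ2]
  rw [← hTdef, Matrix.add_mul, Matrix.mul_assoc A S T, hST, Matrix.mul_one, ← two_smul ℝ A,
    smul_smul]
  norm_num


/-- For `A` with `I - AᵀA` positive definite and `Q = C([[0, -Aᵀ],[A, 0]])`
with top block `Q₁` and bottom block `Q₂`: `I + Q₁` is invertible and `A` is
recovered as `A = ½ Q₂ (I + F)` with `F = (I - Q₁)(I + Q₁)⁻¹`.  Consequently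
the Cayley transform is injective on such block matrices. -/
theorem cayley_grassmann_inverse (p k : ℕ) (hk : 0 < k) (hkp : k < p) :
    (∀ A : Matrix (Fin (p - k)) (Fin k) ℝ, (1 - Aᵀ * A).PosDef →
      IsUnit (1 + topBlock hkp.le (cayley p k (blockX hkp.le 0 A))) ∧
      A = (1 / 2 : ℝ) • (botBlock hkp.le (cayley p k (blockX hkp.le 0 A)) *
        (1 + (1 - topBlock hkp.le (cayley p k (blockX hkp.le 0 A))) *
          (1 + topBlock hkp.le (cayley p k (blockX hkp.le 0 A)))⁻¹)))
    ∧ ∀ A A' : Matrix (Fin (p - k)) (Fin k) ℝ,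
        (1 - Aᵀ * A).PosDef → (1 - A'ᵀ * A').PosDef →
        cayley p k (blockX hkp.le 0 A) = cayley p k (blockX hkp.le 0 A') →
        A = A' := by
  refine ⟨fun A _ => cayley_key hkp A, fun A A' _ _ hQ => ?_⟩
  have h1 := (cayley_key hkp A).2
  have h2 := (cayley_key hkp A').2
  rw [h1, h2, hQ]


end
end

section
/- Let k < p be positive integers, B a k×k skew-symmetric matrix, A a (p−k)×k real matrix, and let X = [[B, −Aᵀ],[A, 0]]. Then I_k + AᵀA − B is invertible, and the blocks of Q = C(X) = (I_p + X)(I_p − X)⁻¹ I_{p×k} are given by Q₁ = (I_k − AᵀA + B)(I_k + AᵀA − B)⁻¹ and Q₂ = 2A(I_k + AᵀA − B)⁻¹, where Q₁ is the top k×k block and Q₂ the bottom (p−k)×k block of Q. -/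
open Matrix MeasureTheory Filter
open scoped Kronecker ENNReal

noncomputable section

lemma skew_dot_aux {k : ℕ} (B : Matrix (Fin k) (Fin k) ℝ) (hB : Bᵀ = -B)
    (v : Fin k → ℝ) : v ⬝ᵥ B *ᵥ v = 0 := by
  have h1 : v ⬝ᵥ B *ᵥ v = (Bᵀ *ᵥ v) ⬝ᵥ v := by
    rw [Matrix.dotProduct_mulVec, Matrix.mulVec_transpose]
  rw [hB, Matrix.neg_mulVec, neg_dotProduct] at h1
  have h2 : (B *ᵥ v) ⬝ᵥ v = v ⬝ᵥ (B *ᵥ v) := dotProduct_comm _ _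
  rw [h2] at h1
  linarith

lemma isUnit_of_pos_aux {k : ℕ} (S : Matrix (Fin k) (Fin k) ℝ)
    (h : ∀ v, v ≠ 0 → 0 < v ⬝ᵥ S *ᵥ v) : IsUnit S := by
  rw [Matrix.isUnit_iff_isUnit_det, isUnit_iff_ne_zero]
  intro hdet
  obtain ⟨v, hv, hv0⟩ := Matrix.exists_mulVec_eq_zero_iff.mpr hdet
  have h2 := h v hv
  rw [hv0, dotProduct_zero] at h2
  exact lt_irrefl 0 h2

/-- For `B` skew-symmetric and `A` arbitrary, with `X = [[B, -Aᵀ],[A, 0]]`,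
the matrix `I + AᵀA - B` is invertible and the blocks of `Q = C(X)` are
`Q₁ = (I - AᵀA + B)(I + AᵀA - B)⁻¹` and `Q₂ = 2A(I + AᵀA - B)⁻¹`. -/
theorem cayley_blocks (p k : ℕ) (hk : 0 < k) (hkp : k < p)
    (B : Matrix (Fin k) (Fin k) ℝ) (hB : Bᵀ = -B)
    (A : Matrix (Fin (p - k)) (Fin k) ℝ) :
    IsUnit (1 + Aᵀ * A - B) ∧
    topBlock hkp.le (cayley p k (blockX hkp.le B A))
      = (1 - Aᵀ * A + B) * (1 + Aᵀ * A - B)⁻¹ ∧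
    botBlock hkp.le (cayley p k (blockX hkp.le B A))
      = (2 : ℝ) • (A * (1 + Aᵀ * A - B)⁻¹) := by
  have hpk : p = k + (p - k) := by omega
  set S : Matrix (Fin k) (Fin k) ℝ := 1 + Aᵀ * A - B with hSdef
  -- invertibility of S
  have hS : IsUnit S := by
    apply isUnit_of_pos_aux
    intro v hv
    have hBv : v ⬝ᵥ B *ᵥ v = 0 := skew_dot_aux B hB v
    have hAA : v ⬝ᵥ (Aᵀ * A) *ᵥ v = (A *ᵥ v) ⬝ᵥ (A *ᵥ v) := by
      rw [← Matrix.mulVec_mulVec, Matrix.dotProduct_mulVec, Matrix.vecMul_transpose]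
    have hvv : 0 < v ⬝ᵥ v := by
      have h0 : 0 ≤ v ⬝ᵥ v := Finset.sum_nonneg fun i _ => mul_self_nonneg _
      rcases h0.lt_or_eq with h | h
      · exact h
      · exact absurd ((dotProduct_self_eq_zero).mp h.symm) hv
    have hAv : 0 ≤ (A *ᵥ v) ⬝ᵥ (A *ᵥ v) :=
      Finset.sum_nonneg fun i _ => mul_self_nonneg _
    rw [hSdef]
    rw [Matrix.sub_mulVec, Matrix.add_mulVec, Matrix.one_mulVec,
      dotProduct_sub, dotProduct_add, hBv, hAA]
    linarith
  have hST : S * S⁻¹ = 1 :=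
    Matrix.mul_nonsing_inv S (by rwa [← Matrix.isUnit_iff_isUnit_det])
  -- block world
  set M : Matrix (Fin k ⊕ Fin (p - k)) (Fin k ⊕ Fin (p - k)) ℝ :=
    Matrix.fromBlocks B (-Aᵀ) A 0 with hMdef
  set W : Matrix (Fin k ⊕ Fin (p - k)) (Fin k ⊕ Fin (p - k)) ℝ :=
    Matrix.fromBlocks S⁻¹ (-(S⁻¹ * Aᵀ)) (A * S⁻¹) (1 - A * S⁻¹ * Aᵀ) with hWdef
  have hsub : (1 : Matrix (Fin k ⊕ Fin (p - k)) (Fin k ⊕ Fin (p - k)) ℝ) - M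
      = Matrix.fromBlocks (1 - B) Aᵀ (-A) 1 := by
    rw [hMdef, ← Matrix.fromBlocks_one]
    ext (i | i) (j | j) <;> simp [Matrix.fromBlocks]
  have hadd : (1 : Matrix (Fin k ⊕ Fin (p - k)) (Fin k ⊕ Fin (p - k)) ℝ) + M
      = Matrix.fromBlocks (1 + B) (-Aᵀ) A 1 := by
    rw [hMdef, ← Matrix.fromBlocks_one]
    ext (i | i) (j | j) <;> simp [Matrix.fromBlocks]
  have e11 : (1 - B) * S⁻¹ + Aᵀ * (A * S⁻¹) = 1 := by
    have h : (1 - B) * S⁻¹ + Aᵀ * (A * S⁻¹) = S * S⁻¹ := by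
      rw [hSdef]
      simp only [Matrix.sub_mul, Matrix.add_mul, Matrix.mul_add, Matrix.mul_sub,
        Matrix.one_mul, Matrix.mul_one, Matrix.neg_mul, Matrix.mul_neg, Matrix.mul_assoc]
      abel
    rw [h, hST]
  have e12 : (1 - B) * -(S⁻¹ * Aᵀ) + Aᵀ * (1 - A * S⁻¹ * Aᵀ) = 0 := by
    have h1 : (1 - B) * -(S⁻¹ * Aᵀ) + Aᵀ * (1 - A * S⁻¹ * Aᵀ)
        = Aᵀ - S * (S⁻¹ * Aᵀ) := by
      rw [hSdef]
      simp only [Matrix.sub_mul, Matrix.add_mul, Matrix.mul_add, Matrix.mul_sub,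
        Matrix.one_mul, Matrix.mul_one, Matrix.neg_mul, Matrix.mul_neg, Matrix.mul_assoc]
      abel
    rw [h1, ← Matrix.mul_assoc, hST, Matrix.one_mul, sub_self]
  have e21 : -A * S⁻¹ + (1 : Matrix (Fin (p - k)) (Fin (p - k)) ℝ) * (A * S⁻¹) = 0 := by
    simp only [Matrix.one_mul, Matrix.neg_mul]
    exact neg_add_cancel _
  have e22 : -A * -(S⁻¹ * Aᵀ) + (1 : Matrix (Fin (p - k)) (Fin (p - k)) ℝ)
      * (1 - A * S⁻¹ * Aᵀ) = 1 := by
    simp only [Matrix.one_mul, Matrix.neg_mul, Matrix.mul_neg, neg_neg, Matrix.mul_assoc]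
    abel
  have hWright : ((1 : Matrix (Fin k ⊕ Fin (p - k)) (Fin k ⊕ Fin (p - k)) ℝ) - M) * W = 1 := by
    rw [hsub, hWdef, Matrix.fromBlocks_multiply, e11, e12, e21, e22,
      Matrix.fromBlocks_one]
  have hinv : ((1 : Matrix (Fin k ⊕ Fin (p - k)) (Fin k ⊕ Fin (p - k)) ℝ) - M)⁻¹ = W :=
    Matrix.inv_eq_right_inv hWright
  -- reindexing
  set g : Fin p ≃ (Fin k ⊕ Fin (p - k)) := (finCongr hpk).trans finSumFinEquiv.symm with hgdef
  have hX : blockX hkp.le B A = M.submatrix g g := rfl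
  have hgl : ∀ i : Fin k, g (Fin.castLE hkp.le i) = Sum.inl i := by
    intro i
    rw [hgdef]
    simp only [Equiv.trans_apply, Equiv.symm_apply_eq, finSumFinEquiv_apply_left]
    ext
    simp
  have hgr : ∀ i : Fin (p - k), g (⟨k + i.1, by omega⟩ : Fin p) = Sum.inr i := by
    intro i
    rw [hgdef]
    simp only [Equiv.trans_apply, Equiv.symm_apply_eq, finSumFinEquiv_apply_right]
    ext
    simp [Fin.natAdd]
  have hJ : Ipk p k = (Matrix.fromRows (1 : Matrix (Fin k) (Fin k) ℝ)
      (0 : Matrix (Fin (p - k)) (Fin k) ℝ)).submatrix g id := by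
    ext i j
    rcases hgi : g i with a | a
    · have hia : (i : ℕ) = (a : ℕ) := by
        have h5 : i = g.symm (Sum.inl a) := by rw [← hgi, Equiv.symm_apply_apply]
        rw [h5, hgdef]
        simp
      simp [Ipk, Matrix.submatrix_apply, hgi, Matrix.fromRows_apply_inl,
        Matrix.one_apply, hia, Fin.ext_iff]
    · have hia : (i : ℕ) = k + (a : ℕ) := by
        have h5 : i = g.symm (Sum.inr a) := by rw [← hgi, Equiv.symm_apply_apply]
        rw [h5, hgdef]
        simp [Fin.natAdd]
      have h6 : ¬ ((i : ℕ) = (j : ℕ)) := by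
        have := j.isLt; omega
      simp [Ipk, Matrix.submatrix_apply, hgi, Matrix.fromRows_apply_inr, h6]
  have hcayley : cayley p k (blockX hkp.le B A)
      = (Matrix.fromRows ((1 + B) * S⁻¹ + -Aᵀ * (A * S⁻¹))
          (A * S⁻¹ + (1 : Matrix (Fin (p - k)) (Fin (p - k)) ℝ)
            * (A * S⁻¹))).submatrix g id := by
    rw [cayley, hX, hJ]
    have h1 : (1 : Matrix (Fin p) (Fin p) ℝ) + M.submatrix g g
        = ((1 : Matrix (Fin k ⊕ Fin (p - k)) (Fin k ⊕ Fin (p - k)) ℝ) + M).submatrix g g := by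
      ext i j
      simp [Matrix.one_apply, EmbeddingLike.apply_eq_iff_eq]
    have h2 : (1 : Matrix (Fin p) (Fin p) ℝ) - M.submatrix g g
        = ((1 : Matrix (Fin k ⊕ Fin (p - k)) (Fin k ⊕ Fin (p - k)) ℝ) - M).submatrix g g := by
      ext i j
      simp [Matrix.one_apply, EmbeddingLike.apply_eq_iff_eq]
    rw [h1, h2, Matrix.inv_submatrix_equiv, hinv,
      Matrix.submatrix_mul_equiv, Matrix.submatrix_mul_equiv,
      hadd, hWdef, Matrix.fromBlocks_multiply, Matrix.fromBlocks_mul_fromRows]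
    simp only [Matrix.mul_zero, Matrix.mul_one, add_zero]
  refine ⟨hS, ?_, ?_⟩
  · rw [hcayley]
    have h3 : (1 + B) * S⁻¹ + -Aᵀ * (A * S⁻¹) = (1 - Aᵀ * A + B) * S⁻¹ := by
      simp only [Matrix.sub_mul, Matrix.add_mul, Matrix.one_mul, Matrix.neg_mul,
        Matrix.mul_assoc]
      abel
    ext i j
    simp only [topBlock, Matrix.submatrix_apply, id_eq, hgl,
      Matrix.fromRows_apply_inl, h3]
  · rw [hcayley]
    have h4 : A * S⁻¹ + (1 : Matrix (Fin (p - k)) (Fin (p - k)) ℝ) * (A * S⁻¹)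
        = (2 : ℝ) • (A * S⁻¹) := by
      rw [Matrix.one_mul, two_smul]
    ext i j
    simp only [botBlock, Matrix.submatrix_apply, id_eq, hgr,
      Matrix.fromRows_apply_inr, h4]

end
end

section
/- Let k < p be positive integers, B a k×k skew-symmetric matrix, A a (p−k)×k real matrix, X = [[B, −Aᵀ],[A, 0]], and Q = C(X) with top k×k block Q₁ and bottom block Q₂. Then I_k + Q₁ is invertible, and setting F = (I_k − Q₁)(I_k + Q₁)⁻¹ one recovers B = ½(Fᵀ − F) and A = ½ Q₂ (I_k + F). In particular, the Cayley transform is injective on the set of block matrices of this form. -/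
open Matrix MeasureTheory Filter
open scoped Kronecker ENNReal

noncomputable section

namespace CayleyAux

open Matrix

variable {p k m : ℕ}

/-- The index equivalence splitting `Fin p` into `Fin k ⊕ Fin (p - k)`. -/
def eqv (h : k ≤ p) : Fin p ≃ Fin k ⊕ Fin (p - k) :=
  (finSumFinEquiv.trans (finCongr (Nat.add_sub_cancel' h))).symm

lemma eqv_symm_inl (h : k ≤ p) (x : Fin k) :
    (eqv h).symm (Sum.inl x) = Fin.castLE h x := by
  simp only [eqv, Equiv.symm_symm, Equiv.trans_apply, finSumFinEquiv_apply_left]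
  ext
  simp

lemma eqv_symm_inr (h : k ≤ p) (y : Fin (p - k)) :
    (eqv h).symm (Sum.inr y) = ⟨k + y.1, by have := y.isLt; omega⟩ := by
  simp only [eqv, Equiv.symm_symm, Equiv.trans_apply, finSumFinEquiv_apply_right]
  ext
  simp

lemma eqv_castLE (h : k ≤ p) (x : Fin k) : eqv h (Fin.castLE h x) = Sum.inl x := by
  rw [← eqv_symm_inl h x, Equiv.apply_symm_apply]

lemma eqv_natAdd (h : k ≤ p) (y : Fin (p - k)) (hy : k + y.1 < p) :
    eqv h ⟨k + y.1, hy⟩ = Sum.inr y := by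
  rw [← eqv_symm_inr h y, Equiv.apply_symm_apply]

lemma fromBlocks_sub {α : Type*} [Sub α] {n m l o : Type*}
    (A : Matrix n l α) (B : Matrix n m α) (C : Matrix o l α) (D : Matrix o m α)
    (A' : Matrix n l α) (B' : Matrix n m α) (C' : Matrix o l α) (D' : Matrix o m α) :
    fromBlocks A B C D - fromBlocks A' B' C' D'
      = fromBlocks (A - A') (B - B') (C - C') (D - D') := by
  ext (i | i) (j | j) <;> rfl

lemma blockX_eq (h : k ≤ p) (B : Matrix (Fin k) (Fin k) ℝ)
    (A : Matrix (Fin (p - k)) (Fin k) ℝ) :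
    blockX h B A = (Matrix.fromBlocks B (-Aᵀ) A 0).submatrix (eqv h) (eqv h) := rfl

lemma Ipk_eq (h : k ≤ p) :
    Ipk p k = (Matrix.fromRows (1 : Matrix (Fin k) (Fin k) ℝ)
      (0 : Matrix (Fin (p - k)) (Fin k) ℝ)).submatrix (eqv h) id := by
  ext i j
  rcases hs : eqv h i with x | y
  · have hi : i = Fin.castLE h x := by
      rw [← eqv_symm_inl h x, ← hs, Equiv.symm_apply_apply]
    subst hi
    simp [Ipk, hs, Matrix.one_apply, Fin.ext_iff]
  · have hi : i = ⟨k + y.1, by have := y.isLt; omega⟩ := by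
      rw [← eqv_symm_inr h y, ← hs, Equiv.symm_apply_apply]
    subst hi
    have : ¬ ((k + y.1 : ℕ) = (j : ℕ)) := by have := j.isLt; omega
    simp [Ipk, hs, this]

lemma topBlock_submatrix (h : k ≤ p) (M : Matrix (Fin k ⊕ Fin (p - k)) (Fin k) ℝ) :
    topBlock h (M.submatrix (eqv h) id) = M.submatrix Sum.inl id := by
  ext i j
  show M (eqv h (Fin.castLE h i)) j = M (Sum.inl i) j
  rw [eqv_castLE]

lemma botBlock_submatrix (h : k ≤ p) (M : Matrix (Fin k ⊕ Fin (p - k)) (Fin k) ℝ) :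
    botBlock h (M.submatrix (eqv h) id) = M.submatrix Sum.inr id := by
  ext i j
  show M (eqv h ⟨k + i.1, _⟩) j = M (Sum.inr i) j
  rw [eqv_natAdd]

lemma fromRows_submatrix_inl {a b c : ℕ} (X : Matrix (Fin a) (Fin c) ℝ)
    (Y : Matrix (Fin b) (Fin c) ℝ) :
    (Matrix.fromRows X Y).submatrix Sum.inl id = X := by
  ext i j; rfl

lemma fromRows_submatrix_inr {a b c : ℕ} (X : Matrix (Fin a) (Fin c) ℝ)
    (Y : Matrix (Fin b) (Fin c) ℝ) :
    (Matrix.fromRows X Y).submatrix Sum.inr id = Y := by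
  ext i j; rfl

lemma isUnit_W (B : Matrix (Fin k) (Fin k) ℝ) (A : Matrix (Fin m) (Fin k) ℝ)
    (hB : Bᵀ = -B) : IsUnit (1 - B + Aᵀ * A) := by
  rw [← Matrix.mulVec_injective_iff_isUnit]
  have key : ∀ v, (1 - B + Aᵀ * A) *ᵥ v = 0 → v = 0 := by
    intro v hv
    have h1 : v ⬝ᵥ ((1 - B + Aᵀ * A) *ᵥ v) = 0 := by rw [hv, dotProduct_zero]
    have hBv : v ⬝ᵥ (B *ᵥ v) = 0 := by
      have h2 : v ⬝ᵥ (B *ᵥ v) = (Bᵀ *ᵥ v) ⬝ᵥ v := by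
        rw [Matrix.dotProduct_mulVec, Matrix.mulVec_transpose]
      rw [hB, Matrix.neg_mulVec, neg_dotProduct] at h2
      rw [dotProduct_comm] at h2 ⊢
      linarith
    have hAv : v ⬝ᵥ ((Aᵀ * A) *ᵥ v) = (A *ᵥ v) ⬝ᵥ (A *ᵥ v) := by
      rw [← Matrix.mulVec_mulVec, Matrix.dotProduct_mulVec, Matrix.vecMul_transpose]
    have hvv : v ⬝ᵥ v + (A *ᵥ v) ⬝ᵥ (A *ᵥ v) = 0 := by
      have hexp : v ⬝ᵥ ((1 - B + Aᵀ * A) *ᵥ v)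
          = v ⬝ᵥ v - v ⬝ᵥ (B *ᵥ v) + v ⬝ᵥ ((Aᵀ * A) *ᵥ v) := by
        rw [Matrix.add_mulVec, Matrix.sub_mulVec, Matrix.one_mulVec,
          dotProduct_add, dotProduct_sub]
      rw [hexp, hBv, hAv] at h1
      linarith
    have n1 : 0 ≤ v ⬝ᵥ v := Finset.sum_nonneg fun i _ => mul_self_nonneg _
    have n2 : 0 ≤ (A *ᵥ v) ⬝ᵥ (A *ᵥ v) := Finset.sum_nonneg fun i _ => mul_self_nonneg _
    exact dotProduct_self_eq_zero.mp (by linarith)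
  intro x y hxy
  have h0 : (1 - B + Aᵀ * A) *ᵥ (x - y) = 0 := by
    rw [Matrix.mulVec_sub, hxy, sub_self]
  exact sub_eq_zero.mp (key _ h0)

/-- Explicit formula for the two blocks of the Cayley transform. -/
lemma cayley_blocks {p k : ℕ} (hkp : k < p)
    (B : Matrix (Fin k) (Fin k) ℝ) (A : Matrix (Fin (p - k)) (Fin k) ℝ)
    (hB : Bᵀ = -B) :
    topBlock hkp.le (cayley p k (blockX hkp.le B A))
        = (1 + B - Aᵀ * A) * (1 - B + Aᵀ * A)⁻¹ ∧
    botBlock hkp.le (cayley p k (blockX hkp.le B A))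
        = A * (1 - B + Aᵀ * A)⁻¹ + A * (1 - B + Aᵀ * A)⁻¹ := by
  have hW : IsUnit (1 - B + Aᵀ * A) := isUnit_W B A hB
  have hWd : IsUnit (1 - B + Aᵀ * A).det := (Matrix.isUnit_iff_isUnit_det _).mp hW
  have hW1 : (1 - B + Aᵀ * A) * (1 - B + Aᵀ * A)⁻¹ = 1 := Matrix.mul_nonsing_inv _ hWd
  have hW2 : (1 - B + Aᵀ * A)⁻¹ * (1 - B + Aᵀ * A) = 1 := Matrix.nonsing_inv_mul _ hWd
  set Y : Matrix (Fin k ⊕ Fin (p - k)) (Fin k ⊕ Fin (p - k)) ℝ :=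
    Matrix.fromBlocks B (-Aᵀ) A 0 with hY
  set Wi : Matrix (Fin k) (Fin k) ℝ := (1 - B + Aᵀ * A)⁻¹ with hWi
  have h1Ysub : (1 : Matrix (Fin k ⊕ Fin (p - k)) (Fin k ⊕ Fin (p - k)) ℝ) - Y
      = Matrix.fromBlocks (1 - B) Aᵀ (-A) 1 := by
    rw [hY, ← Matrix.fromBlocks_one, fromBlocks_sub]
    congr 1 <;> simp
  have h1Yadd : (1 : Matrix (Fin k ⊕ Fin (p - k)) (Fin k ⊕ Fin (p - k)) ℝ) + Y
      = Matrix.fromBlocks (1 + B) (-Aᵀ) A 1 := by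
    rw [hY, ← Matrix.fromBlocks_one, Matrix.fromBlocks_add]
    congr 1 <;> simp
  have hYinv : (1 - Y)⁻¹
      = Matrix.fromBlocks Wi (-(Wi * Aᵀ)) (A * Wi) (1 - A * Wi * Aᵀ) := by
    apply Matrix.inv_eq_right_inv
    rw [h1Ysub, Matrix.fromBlocks_multiply]
    have e11 : (1 - B) * Wi + Aᵀ * (A * Wi) = (1 - B + Aᵀ * A) * Wi := by
      rw [← Matrix.mul_assoc, Matrix.add_mul]
    have e12 : (1 - B) * (-(Wi * Aᵀ)) + Aᵀ * (1 - A * Wi * Aᵀ)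
        = Aᵀ - (1 - B + Aᵀ * A) * (Wi * Aᵀ) := by
      rw [Matrix.mul_neg, Matrix.mul_sub, Matrix.mul_one, Matrix.mul_assoc A Wi Aᵀ,
        ← Matrix.mul_assoc Aᵀ A, Matrix.add_mul]
      abel
    have e21 : (-A) * Wi + (1 : Matrix (Fin (p - k)) (Fin (p - k)) ℝ) * (A * Wi) = 0 := by
      rw [Matrix.neg_mul, Matrix.one_mul, neg_add_cancel]
    have e22 : (-A) * (-(Wi * Aᵀ))
        + (1 : Matrix (Fin (p - k)) (Fin (p - k)) ℝ) * (1 - A * Wi * Aᵀ) = 1 := by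
      rw [Matrix.neg_mul, Matrix.mul_neg, neg_neg, Matrix.one_mul, ← Matrix.mul_assoc]
      abel
    rw [e11, e12, e21, e22, hW1, ← Matrix.mul_assoc, hW1, Matrix.one_mul, sub_self,
      Matrix.fromBlocks_one]
  have hC : cayley p k (blockX hkp.le B A)
      = ((1 + Y) * (1 - Y)⁻¹ *
          Matrix.fromRows (1 : Matrix (Fin k) (Fin k) ℝ) (0 : Matrix (Fin (p - k)) (Fin k) ℝ)).submatrix (eqv hkp.le) id := by
    rw [cayley, blockX_eq, Ipk_eq hkp.le]
    rw [show (1 : Matrix (Fin p) (Fin p) ℝ) + Y.submatrix (eqv hkp.le) (eqv hkp.le)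
        = (1 + Y).submatrix (eqv hkp.le) (eqv hkp.le) by
      ext i j
      simp [Matrix.one_apply]]
    rw [show (1 : Matrix (Fin p) (Fin p) ℝ) - Y.submatrix (eqv hkp.le) (eqv hkp.le)
        = (1 - Y).submatrix (eqv hkp.le) (eqv hkp.le) by
      ext i j
      simp [Matrix.one_apply]]
    rw [Matrix.inv_submatrix_equiv, Matrix.submatrix_mul_equiv,
      Matrix.submatrix_mul_equiv]
  have hprod : (1 + Y) * (1 - Y)⁻¹ *
      Matrix.fromRows (1 : Matrix (Fin k) (Fin k) ℝ) (0 : Matrix (Fin (p - k)) (Fin k) ℝ)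
      = Matrix.fromRows ((1 + B - Aᵀ * A) * Wi) (A * Wi + A * Wi) := by
    rw [hYinv, h1Yadd, Matrix.fromBlocks_multiply, Matrix.fromBlocks_mul_fromRows]
    have e1 : ((1 + B) * Wi + (-Aᵀ) * (A * Wi)) * (1 : Matrix (Fin k) (Fin k) ℝ)
        + ((1 + B) * (-(Wi * Aᵀ)) + (-Aᵀ) * (1 - A * Wi * Aᵀ))
            * (0 : Matrix (Fin (p - k)) (Fin k) ℝ)
        = (1 + B - Aᵀ * A) * Wi := by
      rw [Matrix.mul_one, Matrix.mul_zero, add_zero, Matrix.neg_mul, ← Matrix.mul_assoc,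
        Matrix.sub_mul, Matrix.add_mul]
      abel
    have e2 : (A * Wi + (1 : Matrix (Fin (p - k)) (Fin (p - k)) ℝ) * (A * Wi))
            * (1 : Matrix (Fin k) (Fin k) ℝ)
        + (A * (-(Wi * Aᵀ))
            + (1 : Matrix (Fin (p - k)) (Fin (p - k)) ℝ) * (1 - A * Wi * Aᵀ))
            * (0 : Matrix (Fin (p - k)) (Fin k) ℝ)
        = A * Wi + A * Wi := by
      rw [Matrix.mul_one, Matrix.mul_zero, add_zero, Matrix.one_mul]
    rw [e1, e2]
  constructor
  · rw [hC, topBlock_submatrix, hprod, fromRows_submatrix_inl]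
  · rw [hC, botBlock_submatrix, hprod, fromRows_submatrix_inr]

end CayleyAux

/-- For `B` skew-symmetric and `A` arbitrary, with `X = [[B, -Aᵀ],[A, 0]]` and
`Q = C(X)` having top block `Q₁` and bottom block `Q₂`: `I + Q₁` is
invertible and, with `F = (I - Q₁)(I + Q₁)⁻¹`, one recovers
`B = ½(Fᵀ - F)` and `A = ½ Q₂ (I + F)`.  In particular the Cayley transform
is injective on block matrices of this form. -/
theorem cayley_stiefel_inverse (p k : ℕ) (hk : 0 < k) (hkp : k < p) :
    (∀ (B : Matrix (Fin k) (Fin k) ℝ) (A : Matrix (Fin (p - k)) (Fin k) ℝ),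
      Bᵀ = -B →
      IsUnit (1 + topBlock hkp.le (cayley p k (blockX hkp.le B A))) ∧
      B = (1 / 2 : ℝ) •
        (((1 - topBlock hkp.le (cayley p k (blockX hkp.le B A))) *
            (1 + topBlock hkp.le (cayley p k (blockX hkp.le B A)))⁻¹)ᵀ -
          (1 - topBlock hkp.le (cayley p k (blockX hkp.le B A))) *
            (1 + topBlock hkp.le (cayley p k (blockX hkp.le B A)))⁻¹) ∧
      A = (1 / 2 : ℝ) • (botBlock hkp.le (cayley p k (blockX hkp.le B A)) *
        (1 + (1 - topBlock hkp.le (cayley p k (blockX hkp.le B A))) *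
          (1 + topBlock hkp.le (cayley p k (blockX hkp.le B A)))⁻¹)))
    ∧ ∀ (B B' : Matrix (Fin k) (Fin k) ℝ)
        (A A' : Matrix (Fin (p - k)) (Fin k) ℝ),
        Bᵀ = -B → B'ᵀ = -B' →
        cayley p k (blockX hkp.le B A) = cayley p k (blockX hkp.le B' A') →
        B = B' ∧ A = A' := by
  have main : ∀ (B : Matrix (Fin k) (Fin k) ℝ) (A : Matrix (Fin (p - k)) (Fin k) ℝ),
      Bᵀ = -B →
      IsUnit (1 + topBlock hkp.le (cayley p k (blockX hkp.le B A))) ∧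
      B = (1 / 2 : ℝ) •
        (((1 - topBlock hkp.le (cayley p k (blockX hkp.le B A))) *
            (1 + topBlock hkp.le (cayley p k (blockX hkp.le B A)))⁻¹)ᵀ -
          (1 - topBlock hkp.le (cayley p k (blockX hkp.le B A))) *
            (1 + topBlock hkp.le (cayley p k (blockX hkp.le B A)))⁻¹) ∧
      A = (1 / 2 : ℝ) • (botBlock hkp.le (cayley p k (blockX hkp.le B A)) *
        (1 + (1 - topBlock hkp.le (cayley p k (blockX hkp.le B A))) *
          (1 + topBlock hkp.le (cayley p k (blockX hkp.le B A)))⁻¹)) := by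
    intro B A hB
    obtain ⟨hQ1, hQ2⟩ := CayleyAux.cayley_blocks hkp B A hB
    have hW : IsUnit (1 - B + Aᵀ * A) := CayleyAux.isUnit_W B A hB
    have hWd := (Matrix.isUnit_iff_isUnit_det _).mp hW
    have hW1 : (1 - B + Aᵀ * A) * (1 - B + Aᵀ * A)⁻¹ = 1 := Matrix.mul_nonsing_inv _ hWd
    have hW2 : (1 - B + Aᵀ * A)⁻¹ * (1 - B + Aᵀ * A) = 1 := Matrix.nonsing_inv_mul _ hWd
    have h1 : 1 + topBlock hkp.le (cayley p k (blockX hkp.le B A))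
        = (2 : ℝ) • (1 - B + Aᵀ * A)⁻¹ := by
      rw [hQ1]
      calc (1 : Matrix (Fin k) (Fin k) ℝ) + (1 + B - Aᵀ * A) * (1 - B + Aᵀ * A)⁻¹
          = (1 - B + Aᵀ * A) * (1 - B + Aᵀ * A)⁻¹
              + (1 + B - Aᵀ * A) * (1 - B + Aᵀ * A)⁻¹ := by rw [hW1]
        _ = ((1 - B + Aᵀ * A) + (1 + B - Aᵀ * A)) * (1 - B + Aᵀ * A)⁻¹ := by
              rw [Matrix.add_mul (1 - B + Aᵀ * A) (1 + B - Aᵀ * A)]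
        _ = ((2 : ℝ) • (1 : Matrix (Fin k) (Fin k) ℝ)) * (1 - B + Aᵀ * A)⁻¹ := by
              congr 1
              module
        _ = (2 : ℝ) • (1 - B + Aᵀ * A)⁻¹ := by rw [Matrix.smul_mul, Matrix.one_mul]
    have hUnit : IsUnit (1 + topBlock hkp.le (cayley p k (blockX hkp.le B A))) := by
      rw [h1]
      refine ⟨⟨(2 : ℝ) • (1 - B + Aᵀ * A)⁻¹, (2⁻¹ : ℝ) • (1 - B + Aᵀ * A), ?_, ?_⟩, rfl⟩
      · show (2 : ℝ) • (1 - B + Aᵀ * A)⁻¹ * ((2⁻¹ : ℝ) • (1 - B + Aᵀ * A)) = 1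
        rw [Matrix.smul_mul, Matrix.mul_smul, smul_smul, hW2]
        norm_num
      · show (2⁻¹ : ℝ) • (1 - B + Aᵀ * A) * ((2 : ℝ) • (1 - B + Aᵀ * A)⁻¹) = 1
        rw [Matrix.smul_mul, Matrix.mul_smul, smul_smul, hW1]
        norm_num
    have hinv : (1 + topBlock hkp.le (cayley p k (blockX hkp.le B A)))⁻¹
        = (2⁻¹ : ℝ) • (1 - B + Aᵀ * A) := by
      apply Matrix.inv_eq_right_inv
      rw [h1, Matrix.smul_mul, Matrix.mul_smul, smul_smul, hW2]
      norm_num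
    have hF : (1 - topBlock hkp.le (cayley p k (blockX hkp.le B A))) *
        (1 + topBlock hkp.le (cayley p k (blockX hkp.le B A)))⁻¹ = Aᵀ * A - B := by
      rw [hinv, hQ1]
      have h2 : (1 : Matrix (Fin k) (Fin k) ℝ) - (1 + B - Aᵀ * A) * (1 - B + Aᵀ * A)⁻¹
          = ((2 : ℝ) • (Aᵀ * A - B)) * (1 - B + Aᵀ * A)⁻¹ := by
        calc (1 : Matrix (Fin k) (Fin k) ℝ) - (1 + B - Aᵀ * A) * (1 - B + Aᵀ * A)⁻¹
            = (1 - B + Aᵀ * A) * (1 - B + Aᵀ * A)⁻¹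
                - (1 + B - Aᵀ * A) * (1 - B + Aᵀ * A)⁻¹ := by rw [hW1]
          _ = ((1 - B + Aᵀ * A) - (1 + B - Aᵀ * A)) * (1 - B + Aᵀ * A)⁻¹ := by
                rw [Matrix.sub_mul (1 - B + Aᵀ * A) (1 + B - Aᵀ * A)]
          _ = ((2 : ℝ) • (Aᵀ * A - B)) * (1 - B + Aᵀ * A)⁻¹ := by
                congr 1
                module
      rw [h2]
      calc ((2 : ℝ) • (Aᵀ * A - B)) * (1 - B + Aᵀ * A)⁻¹
            * ((2⁻¹ : ℝ) • (1 - B + Aᵀ * A))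
          = ((2 : ℝ) * (2⁻¹ : ℝ)) • ((Aᵀ * A - B) * ((1 - B + Aᵀ * A)⁻¹
              * (1 - B + Aᵀ * A))) := by
            rw [Matrix.smul_mul, Matrix.smul_mul, Matrix.mul_smul, smul_smul, Matrix.mul_assoc]
        _ = Aᵀ * A - B := by
            rw [hW2, Matrix.mul_one]
            norm_num
    refine ⟨hUnit, ?_, ?_⟩
    · rw [hF, Matrix.transpose_sub, Matrix.transpose_mul, Matrix.transpose_transpose, hB]
      module
    · rw [hQ2, hF]
      have h3 : (1 : Matrix (Fin k) (Fin k) ℝ) + (Aᵀ * A - B) = 1 - B + Aᵀ * A := by abel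
      rw [h3]
      have h4 : (A * (1 - B + Aᵀ * A)⁻¹ + A * (1 - B + Aᵀ * A)⁻¹) * (1 - B + Aᵀ * A)
          = A + A := by
        rw [Matrix.add_mul, Matrix.mul_assoc, hW2, Matrix.mul_one]
      rw [h4]
      module
  refine ⟨main, ?_⟩
  intro B B' A A' hB hB' hQ
  obtain ⟨_, hB1, hA1⟩ := main B A hB
  obtain ⟨_, hB2, hA2⟩ := main B' A' hB'
  rw [hQ] at hB1 hA1
  exact ⟨hB1.trans hB2.symm, hA1.trans hA2.symm⟩


end
end

section
/- Let k < p be positive integers and let Q be a p×k real matrix with QᵀQ = I_k whose top k×k block Q₁ satisfies that I_k + Q₁ is invertible. Define F = (I_k − Q₁)(I_k + Q₁)⁻¹, B = ½(Fᵀ − F), A = ½ Q₂ (I_k + F) where Q₂ is the bottom (p−k)×k block of Q, and X = [[B, −Aᵀ],[A, 0]]. Then B is skew-symmetric, X is skew-symmetric, and C(X) = Q. Hence every Q in the Stiefel manifold with I_k + Q₁ invertible lies in the image of the Cayley parametrization. -/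
open Matrix MeasureTheory Filter
open scoped Kronecker ENNReal

noncomputable section

namespace CayleyAux

open Matrix

variable {k m : ℕ}

lemma skew_block (B : Matrix (Fin k) (Fin k) ℝ) (A : Matrix (Fin m) (Fin k) ℝ)
    (hB : Bᵀ = -B) :
    (fromBlocks B (-Aᵀ) A 0)ᵀ = -(fromBlocks B (-Aᵀ) A 0) := by
  rw [fromBlocks_transpose, hB]
  simp [fromBlocks_neg]

lemma unit_one_sub {n : Type*} [Fintype n] [DecidableEq n] (X : Matrix n n ℝ) (hX : Xᵀ = -X) :
    IsUnit (1 - X).det := by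
  have hpd : (1 + Xᴴ * X).PosDef :=
    Matrix.PosDef.add_posSemidef Matrix.PosDef.one (posSemidef_conjTranspose_mul_self X)
  have hprod : (1 - X) * (1 + X) = 1 + Xᴴ * X := by
    rw [conjTranspose_eq_transpose_of_trivial, hX]
    noncomm_ring
  have hu : IsUnit ((1 - X).det * (1 + X).det) := by
    rw [← det_mul, hprod]
    exact hpd.det_pos.ne'.isUnit
  exact isUnit_of_mul_isUnit_left hu

lemma main_block (Q1 B : Matrix (Fin k) (Fin k) ℝ) (Q2 A : Matrix (Fin m) (Fin k) ℝ)
    (hi : 1 + B = (1 - B) * Q1 + Aᵀ * Q2) (hii : A = -A * Q1 + Q2) :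
    (1 + fromBlocks B (-Aᵀ) A 0) * fromRows (1 : Matrix (Fin k) (Fin k) ℝ)
        (0 : Matrix (Fin m) (Fin k) ℝ)
      = (1 - fromBlocks B (-Aᵀ) A 0) * fromRows Q1 Q2 := by
  rw [← fromBlocks_one, sub_eq_add_neg, fromBlocks_neg, fromBlocks_add, fromBlocks_add,
    fromBlocks_mul_fromRows, fromBlocks_mul_fromRows]
  rw [fromRows_ext_iff]
  constructor
  · simpa [sub_eq_add_neg] using hi
  · simpa [sub_eq_add_neg] using hii

lemma core (Q1 : Matrix (Fin k) (Fin k) ℝ) (Q2 : Matrix (Fin m) (Fin k) ℝ)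
    (hO : Q1ᵀ * Q1 + Q2ᵀ * Q2 = 1) (h1 : IsUnit (1 + Q1)) :
    (1 + (1/2 : ℝ) • (((1 - Q1) * (1 + Q1)⁻¹)ᵀ - (1 - Q1) * (1 + Q1)⁻¹)
        = (1 - (1/2 : ℝ) • (((1 - Q1) * (1 + Q1)⁻¹)ᵀ - (1 - Q1) * (1 + Q1)⁻¹)) * Q1
          + ((1/2 : ℝ) • (Q2 * (1 + (1 - Q1) * (1 + Q1)⁻¹)))ᵀ * Q2)
    ∧ (1/2 : ℝ) • (Q2 * (1 + (1 - Q1) * (1 + Q1)⁻¹))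
        = -((1/2 : ℝ) • (Q2 * (1 + (1 - Q1) * (1 + Q1)⁻¹))) * Q1 + Q2 := by
  set F : Matrix (Fin k) (Fin k) ℝ := (1 - Q1) * (1 + Q1)⁻¹ with hF
  have hdet : IsUnit (1 + Q1).det := (isUnit_iff_isUnit_det _).1 h1
  have hMS : (1 + Q1)⁻¹ * (1 + Q1) = 1 := nonsing_inv_mul _ hdet
  have hSM : (1 + Q1) * (1 + Q1)⁻¹ = 1 := mul_nonsing_inv _ hdet
  have hFS : F * (1 + Q1) = 1 - Q1 := by rw [hF, mul_assoc, hMS, mul_one]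
  have hFQ : F * Q1 = 1 - Q1 - F := by rw [← hFS]; noncomm_ring
  have hQ2 : Q2ᵀ * Q2 = 1 - Q1ᵀ * Q1 := by rw [← hO]; abel
  have cancel : ∀ U V : Matrix (Fin k) (Fin k) ℝ, U * (1 + Q1) = V * (1 + Q1) → U = V := by
    intro U V h
    have h2 := congrArg (· * (1 + Q1)⁻¹) h
    simpa [mul_assoc, hSM] using h2
  have hkey1 : Q1ᵀ * (1 - F) = Q1ᵀ * Q1 * (1 + F) := by
    apply cancel
    rw [mul_assoc, mul_assoc, sub_mul, add_mul, one_mul, hFS]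
    noncomm_ring
  have hkey2 : (1 - Fᵀ) * Q1 = (1 + Fᵀ) * (Q1ᵀ * Q1) := by
    have h2 := congrArg Matrix.transpose hkey1
    simpa [Matrix.transpose_mul, Matrix.transpose_sub, Matrix.transpose_add,
      Matrix.transpose_one, mul_assoc] using h2
  have hkey3 : Fᵀ * (Q1ᵀ * Q1) = Q1 - Fᵀ * Q1 - Q1ᵀ * Q1 := by
    have h2 := hkey2
    rw [sub_mul, one_mul, add_mul, one_mul] at h2
    rw [h2]
    abel
  constructor
  · simp only [Matrix.transpose_smul, Matrix.transpose_mul, Matrix.transpose_add,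
      Matrix.transpose_one, Matrix.sub_mul, Matrix.add_mul, Matrix.mul_add, Matrix.mul_sub,
      Matrix.smul_mul, Matrix.one_mul, Matrix.mul_one, smul_sub, smul_add, Matrix.mul_assoc]
    rw [hQ2]
    simp only [Matrix.mul_sub, Matrix.mul_one]
    rw [hkey3, hFQ]
    module
  · simp only [Matrix.neg_mul, Matrix.add_mul, Matrix.smul_mul, Matrix.mul_add, Matrix.mul_one,
      Matrix.mul_assoc, smul_add]
    rw [hFQ]
    simp only [Matrix.mul_sub, Matrix.mul_one]
    module

end CayleyAux

/-- Every orthogonal `p × k` matrix `Q` whose top block `Q₁` satisfies that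
`I + Q₁` is invertible lies in the image of the Cayley parametrization: with
`F = (I - Q₁)(I + Q₁)⁻¹`, `B = ½(Fᵀ - F)`, `A = ½ Q₂ (I + F)` and
`X = [[B, -Aᵀ],[A, 0]]`, the matrices `B` and `X` are skew-symmetric and
`C(X) = Q`. -/
theorem cayley_surjective (p k : ℕ) (hk : 0 < k) (hkp : k < p)
    (Q : Matrix (Fin p) (Fin k) ℝ) (hQ : Qᵀ * Q = 1)
    (h1 : IsUnit (1 + topBlock hkp.le Q)) :
    ((1 / 2 : ℝ) • (((1 - topBlock hkp.le Q) * (1 + topBlock hkp.le Q)⁻¹)ᵀ -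
        (1 - topBlock hkp.le Q) * (1 + topBlock hkp.le Q)⁻¹))ᵀ
      = -((1 / 2 : ℝ) • (((1 - topBlock hkp.le Q) * (1 + topBlock hkp.le Q)⁻¹)ᵀ -
        (1 - topBlock hkp.le Q) * (1 + topBlock hkp.le Q)⁻¹)) ∧
    (blockX hkp.le
        ((1 / 2 : ℝ) • (((1 - topBlock hkp.le Q) * (1 + topBlock hkp.le Q)⁻¹)ᵀ -
          (1 - topBlock hkp.le Q) * (1 + topBlock hkp.le Q)⁻¹))
        ((1 / 2 : ℝ) • (botBlock hkp.le Q *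
          (1 + (1 - topBlock hkp.le Q) * (1 + topBlock hkp.le Q)⁻¹))))ᵀ
      = -(blockX hkp.le
        ((1 / 2 : ℝ) • (((1 - topBlock hkp.le Q) * (1 + topBlock hkp.le Q)⁻¹)ᵀ -
          (1 - topBlock hkp.le Q) * (1 + topBlock hkp.le Q)⁻¹))
        ((1 / 2 : ℝ) • (botBlock hkp.le Q *
          (1 + (1 - topBlock hkp.le Q) * (1 + topBlock hkp.le Q)⁻¹)))) ∧
    cayley p k (blockX hkp.le
        ((1 / 2 : ℝ) • (((1 - topBlock hkp.le Q) * (1 + topBlock hkp.le Q)⁻¹)ᵀ -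
          (1 - topBlock hkp.le Q) * (1 + topBlock hkp.le Q)⁻¹))
        ((1 / 2 : ℝ) • (botBlock hkp.le Q *
          (1 + (1 - topBlock hkp.le Q) * (1 + topBlock hkp.le Q)⁻¹))))
      = Q := by
  have hpk : p = k + (p - k) := by omega
  set Q1 : Matrix (Fin k) (Fin k) ℝ := topBlock hkp.le Q with hQ1d
  set Q2 : Matrix (Fin (p - k)) (Fin k) ℝ := botBlock hkp.le Q with hQ2d
  set B : Matrix (Fin k) (Fin k) ℝ :=
    (1 / 2 : ℝ) • (((1 - Q1) * (1 + Q1)⁻¹)ᵀ - (1 - Q1) * (1 + Q1)⁻¹) with hBd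
  set A : Matrix (Fin (p - k)) (Fin k) ℝ :=
    (1 / 2 : ℝ) • (Q2 * (1 + (1 - Q1) * (1 + Q1)⁻¹)) with hAd
  set e : Fin p ≃ (Fin k ⊕ Fin (p - k)) := (finCongr hpk).trans finSumFinEquiv.symm with he
  -- claim 1 : B skew
  have c1 : Bᵀ = -B := by
    rw [hBd]
    simp only [Matrix.transpose_smul, Matrix.transpose_sub, Matrix.transpose_transpose]
    module
  -- block matrix facts
  have hskew : (fromBlocks B (-Aᵀ) A 0)ᵀ = -(fromBlocks B (-Aᵀ) A 0) :=
    CayleyAux.skew_block B A c1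
  have hXdef : blockX hkp.le B A = (fromBlocks B (-Aᵀ) A 0).submatrix ⇑e ⇑e := rfl
  have c2 : (blockX hkp.le B A)ᵀ = -(blockX hkp.le B A) := by
    rw [hXdef, Matrix.transpose_submatrix, hskew]
    simp [Matrix.submatrix_neg]
  refine ⟨c1, c2, ?_⟩
  -- decompositions
  have hrows : fromRows Q1 Q2 = Q.submatrix ⇑e.symm id := by
    ext x j
    cases x with
    | inl a =>
      have hidx : e.symm (Sum.inl a) = Fin.castLE hkp.le a := by
        simp only [he, Equiv.symm_trans_apply, Equiv.symm_symm, finSumFinEquiv_apply_left]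
        exact Fin.ext rfl
      simp [Matrix.fromRows_apply_inl, hQ1d, topBlock, hidx]
    | inr b =>
      have hidx : e.symm (Sum.inr b) =
          (⟨k + b.1, by have := b.isLt; omega⟩ : Fin p) := by
        simp only [he, Equiv.symm_trans_apply, Equiv.symm_symm, finSumFinEquiv_apply_right]
        exact Fin.ext rfl
      simp [Matrix.fromRows_apply_inr, hQ2d, botBlock, hidx]
  have hQdecomp : Q = (fromRows Q1 Q2).submatrix ⇑e id := by
    rw [hrows, Matrix.submatrix_submatrix]
    ext i j
    simp
  have hIrows : fromRows (1 : Matrix (Fin k) (Fin k) ℝ)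
      (0 : Matrix (Fin (p - k)) (Fin k) ℝ) = (Ipk p k).submatrix ⇑e.symm id := by
    ext x j
    cases x with
    | inl a =>
      have hidx : e.symm (Sum.inl a) = Fin.castLE hkp.le a := by
        simp only [he, Equiv.symm_trans_apply, Equiv.symm_symm, finSumFinEquiv_apply_left]
        exact Fin.ext rfl
      simp [Matrix.fromRows_apply_inl, Ipk, hidx, Matrix.one_apply, Fin.ext_iff]
    | inr b =>
      have hidx : e.symm (Sum.inr b) =
          (⟨k + b.1, by have := b.isLt; omega⟩ : Fin p) := by
        simp only [he, Equiv.symm_trans_apply, Equiv.symm_symm, finSumFinEquiv_apply_right]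
        exact Fin.ext rfl
      have : ¬ (k + b.1 = (j : ℕ)) := by have := j.isLt; omega
      simp [Matrix.fromRows_apply_inr, Ipk, hidx, this]
  have hIdecomp : Ipk p k = (fromRows (1 : Matrix (Fin k) (Fin k) ℝ)
      (0 : Matrix (Fin (p - k)) (Fin k) ℝ)).submatrix ⇑e id := by
    rw [hIrows, Matrix.submatrix_submatrix]
    ext i j
    simp
  -- orthogonality in blocks
  have hO : Q1ᵀ * Q1 + Q2ᵀ * Q2 = 1 := by
    have h := hQ
    rw [hQdecomp, Matrix.transpose_submatrix, Matrix.submatrix_mul_equiv,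
      Matrix.submatrix_id_id, transpose_fromRows, fromCols_mul_fromRows] at h
    exact h
  obtain ⟨hi, hii⟩ := CayleyAux.core Q1 Q2 hO h1
  have hmain := CayleyAux.main_block Q1 B Q2 A hi hii
  -- transport the main identity to size p
  have hone : (1 : Matrix (Fin p) (Fin p) ℝ)
      = (1 : Matrix (Fin k ⊕ Fin (p - k)) (Fin k ⊕ Fin (p - k)) ℝ).submatrix ⇑e ⇑e :=
    (Matrix.submatrix_one_equiv e).symm
  have hmul1 : (1 + blockX hkp.le B A) * Ipk p k
      = ((1 + fromBlocks B (-Aᵀ) A 0) * fromRows (1 : Matrix (Fin k) (Fin k) ℝ)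
          (0 : Matrix (Fin (p - k)) (Fin k) ℝ)).submatrix ⇑e id := by
    rw [hXdef, hIdecomp, ← Matrix.submatrix_mul_equiv
      (1 + fromBlocks B (-Aᵀ) A 0) _ ⇑e e id]
    congr 1
    rw [Matrix.submatrix_add, hone]
    rfl
  have hmul2 : (1 - blockX hkp.le B A) * Q
      = ((1 - fromBlocks B (-Aᵀ) A 0) * fromRows Q1 Q2).submatrix ⇑e id := by
    rw [hXdef, hQdecomp, ← Matrix.submatrix_mul_equiv
      (1 - fromBlocks B (-Aᵀ) A 0) _ ⇑e e id]
    congr 1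
    rw [Matrix.submatrix_sub, hone]
    rfl
  have hmainp : (1 + blockX hkp.le B A) * Ipk p k = (1 - blockX hkp.le B A) * Q := by
    rw [hmul1, hmul2, hmain]
  -- invertibility
  have hu : IsUnit (1 - blockX hkp.le B A).det := by
    have hdet' : IsUnit (1 - fromBlocks B (-Aᵀ) A 0).det :=
      CayleyAux.unit_one_sub _ hskew
    have hsub : (1 : Matrix (Fin p) (Fin p) ℝ) - (fromBlocks B (-Aᵀ) A 0).submatrix ⇑e ⇑e
        = (1 - fromBlocks B (-Aᵀ) A 0).submatrix ⇑e ⇑e := by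
      rw [Matrix.submatrix_sub, hone]
      rfl
    rw [hXdef, hsub, Matrix.det_submatrix_equiv_self]
    exact hdet'
  -- conclude
  set X : Matrix (Fin p) (Fin p) ℝ := blockX hkp.le B A with hXd
  have hcomm : (1 + X) * (1 - X)⁻¹ = (1 - X)⁻¹ * (1 + X) := by
    have hc : (1 - X) * ((1 + X) * (1 - X)⁻¹) = (1 + X) * ((1 - X) * (1 - X)⁻¹) := by
      rw [← Matrix.mul_assoc, ← Matrix.mul_assoc]
      congr 1
      noncomm_ring
    calc (1 + X) * (1 - X)⁻¹
        = (1 - X)⁻¹ * ((1 - X) * ((1 + X) * (1 - X)⁻¹)) := by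
          rw [← Matrix.mul_assoc, Matrix.nonsing_inv_mul _ hu, Matrix.one_mul]
      _ = (1 - X)⁻¹ * (1 + X) := by
          rw [hc, Matrix.mul_nonsing_inv _ hu, Matrix.mul_one]
  show cayley p k X = Q
  rw [cayley, hcomm, Matrix.mul_assoc, hmainp, ← Matrix.mul_assoc,
    Matrix.nonsing_inv_mul _ hu, Matrix.one_mul]


end
end

section
/- Let Q₁ be a real k×k matrix with k‖Q₁‖_max < 1, let F = (I_k − Q₁)(I_k + Q₁)⁻¹ (which is defined since ‖Q₁‖_F ≤ k‖Q₁‖_max < 1 makes I_k + Q₁ invertible), and let B = ½(Fᵀ − F). Then ‖(Q₁ − Q₁ᵀ) − B‖_max ≤ 2 k² ‖Q₁‖²_max / (1 − k‖Q₁‖_max). -/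
open Matrix MeasureTheory Filter
open scoped Kronecker ENNReal

noncomputable section

lemma abs_entry_le_maxNorm {a b : ℕ} (M : Matrix (Fin a) (Fin b) ℝ) (i : Fin a) (j : Fin b) :
    |M i j| ≤ maxNorm M := by
  unfold maxNorm
  exact le_ciSup (f := fun q : Fin a × Fin b => |M q.1 q.2|) (Set.Finite.bddAbove (Set.finite_range _)) ⟨i, j⟩

lemma maxNorm_le {a b : ℕ} [Nonempty (Fin a)] [Nonempty (Fin b)]
    {M : Matrix (Fin a) (Fin b) ℝ} {c : ℝ} (h : ∀ i j, |M i j| ≤ c) : maxNorm M ≤ c := by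
  unfold maxNorm
  exact ciSup_le fun q => h q.1 q.2

lemma maxNorm_nonneg {a b : ℕ} [Nonempty (Fin a)] [Nonempty (Fin b)]
    (M : Matrix (Fin a) (Fin b) ℝ) : 0 ≤ maxNorm M :=
  (abs_nonneg _).trans (abs_entry_le_maxNorm M (Classical.arbitrary _) (Classical.arbitrary _))

lemma maxNorm_transpose {a b : ℕ} [Nonempty (Fin a)] [Nonempty (Fin b)]
    (M : Matrix (Fin a) (Fin b) ℝ) : maxNorm Mᵀ = maxNorm M := by
  apply le_antisymm
  · exact maxNorm_le fun i j => abs_entry_le_maxNorm M j i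
  · exact maxNorm_le fun i j => abs_entry_le_maxNorm Mᵀ j i

lemma maxNorm_mul_le {a b c : ℕ} [Nonempty (Fin a)] [Nonempty (Fin b)] [Nonempty (Fin c)]
    (A : Matrix (Fin a) (Fin b) ℝ) (B : Matrix (Fin b) (Fin c) ℝ) :
    maxNorm (A * B) ≤ (b : ℝ) * maxNorm A * maxNorm B := by
  apply maxNorm_le
  intro i j
  calc |(A * B) i j| = |∑ l, A i l * B l j| := by rw [Matrix.mul_apply]
    _ ≤ ∑ l, |A i l * B l j| := Finset.abs_sum_le_sum_abs _ _
    _ ≤ ∑ _l : Fin b, maxNorm A * maxNorm B := by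
        refine Finset.sum_le_sum fun l _ => ?_
        rw [abs_mul]
        exact mul_le_mul (abs_entry_le_maxNorm A i l) (abs_entry_le_maxNorm B l j)
          (abs_nonneg _) (maxNorm_nonneg A)
    _ = (b : ℝ) * maxNorm A * maxNorm B := by
        rw [Finset.sum_const, Finset.card_univ, Fintype.card_fin, nsmul_eq_mul, mul_assoc]

lemma maxNorm_sub_le {a b : ℕ} [Nonempty (Fin a)] [Nonempty (Fin b)]
    (A B : Matrix (Fin a) (Fin b) ℝ) : maxNorm (A - B) ≤ maxNorm A + maxNorm B :=
  maxNorm_le fun i j => by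
    calc |(A - B) i j| = |A i j - B i j| := rfl
      _ ≤ |A i j| + |B i j| := abs_sub _ _
      _ ≤ _ := add_le_add (abs_entry_le_maxNorm A i j) (abs_entry_le_maxNorm B i j)

lemma maxNorm_one_le {a : ℕ} [Nonempty (Fin a)] :
    maxNorm (1 : Matrix (Fin a) (Fin a) ℝ) ≤ 1 :=
  maxNorm_le fun i j => by rw [Matrix.one_apply]; split <;> simp

section linfty
attribute [local instance] Matrix.linftyOpNormedRing Matrix.linftyOpNormedAddCommGroup

lemma isUnit_one_add_of_small {k : ℕ} (hk : 0 < k) (Q : Matrix (Fin k) (Fin k) ℝ)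
    (h : (k : ℝ) * maxNorm Q < 1) : IsUnit (1 + Q) := by
  haveI : NeZero k := ⟨hk.ne'⟩
  have hm : 0 ≤ maxNorm Q := maxNorm_nonneg Q
  have hnorm : ‖Q‖ ≤ (k : ℝ) * maxNorm Q := by
    rw [Matrix.linfty_opNorm_def]
    have : (Finset.univ.sup fun i : Fin k => ∑ j, ‖Q i j‖₊) ≤
        (⟨(k : ℝ) * maxNorm Q, by positivity⟩ : NNReal) := by
      apply Finset.sup_le
      intro i _
      refine NNReal.coe_le_coe.mp ?_
      rw [NNReal.coe_sum]
      calc (∑ j, (‖Q i j‖₊ : ℝ)) = ∑ j, |Q i j| := by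
            simp [coe_nnnorm, Real.norm_eq_abs]
        _ ≤ ∑ _j : Fin k, maxNorm Q := Finset.sum_le_sum fun j _ => abs_entry_le_maxNorm Q i j
        _ = (k : ℝ) * maxNorm Q := by
            rw [Finset.sum_const, Finset.card_univ, Fintype.card_fin, nsmul_eq_mul]
    exact_mod_cast this
  have hlt : ‖-Q‖ < 1 := by rw [norm_neg]; exact lt_of_le_of_lt hnorm h
  letI := (Matrix.linftyOpNormedSpace : NormedSpace ℝ (Matrix (Fin k) (Fin k) ℝ))
  have : HasSummableGeomSeries (Matrix (Fin k) (Fin k) ℝ) :=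
    @instHasSummableGeomSeriesOfCompleteSpace _ _ (FiniteDimensional.complete ℝ _)
  have := (Units.oneSub (-Q) hlt).isUnit
  rwa [Units.val_oneSub, sub_neg_eq_add] at this
end linfty

/-- Bound on the error of the linear approximation `Q₁ - Q₁ᵀ` to
`B = ½(Fᵀ - F)`, where `F = (I - Q₁)(I + Q₁)⁻¹`, when `k‖Q₁‖_max < 1`. -/
theorem B_approx_bound (k : ℕ) (hk : 0 < k) (Q₁ : Matrix (Fin k) (Fin k) ℝ)
    (h : (k : ℝ) * maxNorm Q₁ < 1) :
    IsUnit (1 + Q₁) ∧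
    maxNorm ((Q₁ - Q₁ᵀ) -
        (1 / 2 : ℝ) • (((1 - Q₁) * (1 + Q₁)⁻¹)ᵀ - (1 - Q₁) * (1 + Q₁)⁻¹))
      ≤ 2 * (k : ℝ) ^ 2 * (maxNorm Q₁) ^ 2 / (1 - (k : ℝ) * maxNorm Q₁) := by
  haveI : NeZero k := ⟨hk.ne'⟩
  have hu : IsUnit (1 + Q₁) := isUnit_one_add_of_small hk Q₁ h
  refine ⟨hu, ?_⟩
  set m : ℝ := maxNorm Q₁ with hm
  have hm0 : 0 ≤ m := maxNorm_nonneg Q₁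
  have hkm : 0 < 1 - (k : ℝ) * m := by linarith
  set R : Matrix (Fin k) (Fin k) ℝ := (1 + Q₁)⁻¹ with hRdef
  have hdet : IsUnit (1 + Q₁).det := (Matrix.isUnit_iff_isUnit_det _).mp hu
  have h1 : (1 + Q₁) * R = 1 := Matrix.mul_nonsing_inv _ hdet
  have hR : R = 1 - Q₁ * R := by
    rw [add_mul, one_mul] at h1
    exact (eq_sub_of_add_eq h1)
  set D : Matrix (Fin k) (Fin k) ℝ := Q₁ * R with hDdef
  have hF : (1 - Q₁) * R = 1 - D - D := by
    have h4 : (1 - Q₁) * R = R - D := by rw [sub_mul, one_mul, ← hDdef]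
    rw [h4, hR]
  have hG : Q₁ - D = Q₁ * D := by
    have h2 : 1 - R = D := by rw [hR]; abel
    calc Q₁ - D = Q₁ * (1 - R) := by rw [Matrix.mul_sub, Matrix.mul_one, hDdef]
      _ = Q₁ * D := by rw [h2]
  have key : (Q₁ - Q₁ᵀ) - (1 / 2 : ℝ) • (((1 - Q₁) * R)ᵀ - (1 - Q₁) * R)
      = (Q₁ * D) - (Q₁ * D)ᵀ := by
    rw [hF, ← hG]
    simp only [Matrix.transpose_sub, Matrix.transpose_one]
    module
  rw [key]
  -- now the norm bounds
  have hRb : maxNorm R ≤ 1 / (1 - (k : ℝ) * m) := by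
    have h3 : maxNorm R ≤ 1 + (k : ℝ) * m * maxNorm R := by
      calc maxNorm R = maxNorm (1 - Q₁ * R) := by rw [← hR]
        _ ≤ maxNorm (1 : Matrix (Fin k) (Fin k) ℝ) + maxNorm (Q₁ * R) := maxNorm_sub_le _ _
        _ ≤ 1 + (k : ℝ) * m * maxNorm R :=
            add_le_add maxNorm_one_le (maxNorm_mul_le Q₁ R)
    rw [le_div_iff₀ hkm]
    nlinarith [maxNorm_nonneg R]
  have hDb : maxNorm D ≤ (k : ℝ) * m * maxNorm R := maxNorm_mul_le Q₁ R
  have hGb : maxNorm (Q₁ * D) ≤ (k : ℝ) * m * ((k : ℝ) * m * maxNorm R) := by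
    calc maxNorm (Q₁ * D) ≤ (k : ℝ) * m * maxNorm D := maxNorm_mul_le Q₁ D
      _ ≤ (k : ℝ) * m * ((k : ℝ) * m * maxNorm R) := by
          apply mul_le_mul_of_nonneg_left hDb (by positivity)
  have htot : maxNorm ((Q₁ * D) - (Q₁ * D)ᵀ) ≤ 2 * ((k : ℝ) * m * ((k : ℝ) * m * maxNorm R)) := by
    calc maxNorm ((Q₁ * D) - (Q₁ * D)ᵀ) ≤ maxNorm (Q₁ * D) + maxNorm ((Q₁ * D)ᵀ) :=
          maxNorm_sub_le _ _
      _ = maxNorm (Q₁ * D) + maxNorm (Q₁ * D) := by rw [maxNorm_transpose]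
      _ ≤ 2 * ((k : ℝ) * m * ((k : ℝ) * m * maxNorm R)) := by linarith
  refine htot.trans ?_
  rw [div_eq_mul_inv]
  have hRb' : maxNorm R ≤ (1 - (k : ℝ) * m)⁻¹ := by rwa [one_div] at hRb
  have hR0 : 0 ≤ maxNorm R := maxNorm_nonneg R
  nlinarith [mul_le_mul_of_nonneg_left hRb' (show (0:ℝ) ≤ 2 * ((k:ℝ)*m*((k:ℝ)*m)) by positivity)]

end
end
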